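/- arXiv:1911.09088 — 6 statements merged into one kernel-verified Lean document; each statement's English description precedes it below -/
import Mathlib

section
/- If X is a scattered topological space, then on the homeomorphism group Homeo(X) the topology of pointwise convergence coincides with the topology of pointwise convergence with respect to the discrete topology on X (i.e., a net of homeomorphisms converges pointwise to a homeomorphism g iff for every x it is eventually equal to g(x)). -/
/-- A topological space is *scattered* if every nonempty subset has a point
isolated in it (for the subspace topology). -/
def Scattered (X : Type*) [TopologicalSpace X] : Prop :=
  ∀ A : Set X, A.Nonempty → ∃ x ∈ A, ∃ U : Set X, IsOpen U ∧ U ∩ A = {x}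

namespace ScatteredCBAux

open OrdinalApprox Cardinal Set

variable (X : Type*) [TopologicalSpace X]

/-- Cantor–Bendixson derivative, as a monotone map on sets. -/
def DOp : Set X →o Set X where
  toFun A := {x | x ∈ A ∧ x ∈ closure (A \ {x})}
  monotone' := by
    intro A B hAB x hx
    exact ⟨hAB hx.1, closure_mono (Set.diff_subset_diff_left hAB) hx.2⟩

lemma DOp_subset (A : Set X) : DOp X A ⊆ A := fun _ hx => hx.1

/-- Transfinite iterates of the derivative. -/
noncomputable def deriv : Ordinal → Set X := gfpApprox (DOp X) ⊤

variable {X}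

lemma preimage_DOp (h : X ≃ₜ X) (A : Set X) : h ⁻¹' DOp X A = DOp X (h ⁻¹' A) := by
  ext x
  have h1 : h ⁻¹' (A \ {h x}) = h ⁻¹' A \ {x} := by
    rw [Set.preimage_diff]
    congr 1
    ext z
    simp [h.injective.eq_iff]
  simp only [DOp, OrderHom.coe_mk, Set.mem_preimage, Set.mem_setOf_eq]
  constructor
  · rintro ⟨hxA, hxc⟩
    refine ⟨hxA, ?_⟩
    have : x ∈ h ⁻¹' closure (A \ {h x}) := hxc
    rwa [h.preimage_closure, h1] at this
  · rintro ⟨hxA, hxc⟩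
    refine ⟨hxA, ?_⟩
    have : x ∈ h ⁻¹' closure (A \ {h x}) := by rwa [h.preimage_closure, h1]
    exact this

lemma preimage_deriv : ∀ (a : Ordinal) (h : X ≃ₜ X), h ⁻¹' deriv X a ⊆ deriv X a := by
  intro a
  induction a using Ordinal.induction with
  | h a IH =>
    intro h x hx
    have hderiv_eq : ∀ b < a, ∀ g : X ≃ₜ X, g ⁻¹' deriv X b = deriv X b := by
      intro b hb g
      apply subset_antisymm (IH b hb g)
      intro z hz
      have : g.symm (g z) ∈ deriv X b := by simpa using hz
      have h2 := IH b hb g.symm this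
      simpa using h2
    rw [deriv, gfpApprox] at hx ⊢
    simp only [Set.mem_preimage, Set.top_eq_univ, Set.inf_eq_inter, Set.iInf_eq_iInter, Set.mem_inter_iff, Set.mem_univ, true_and, Set.mem_iInter] at hx ⊢
    intro b hb
    have hxb : h x ∈ DOp X (gfpApprox (DOp X) ⊤ b) := hx b hb
    have h3 : x ∈ h ⁻¹' DOp X (deriv X b) := hxb
    rw [preimage_DOp, hderiv_eq b hb h] at h3
    exact h3

lemma deriv_eq (a : Ordinal) (h : X ≃ₜ X) : h ⁻¹' deriv X a = deriv X a := by
  apply subset_antisymm (preimage_deriv a h)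
  intro z hz
  have : h.symm (h z) ∈ deriv X a := by simpa using hz
  have h2 := preimage_deriv a h.symm this
  simpa using h2

lemma fixed_empty (hX : Scattered X) {A : Set X} (hA : DOp X A = A) : A = ∅ := by
  by_contra hne
  obtain ⟨x, hxA, U, hU, hUA⟩ := hX A (Set.nonempty_iff_ne_empty.2 hne)
  have hxD : x ∈ DOp X A := hA.symm ▸ hxA
  have hxc : x ∈ closure (A \ {x}) := hxD.2
  rw [mem_closure_iff] at hxc
  have hxU : x ∈ U := by
    have hx1 : x ∈ U ∩ A := hUA ▸ rfl
    exact hx1.1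
  obtain ⟨z, hzU, hzA, hzx⟩ := hxc U hU hxU
  have hz : z ∈ U ∩ A := ⟨hzU, hzA⟩
  rw [hUA] at hz
  exact hzx hz

/-- Every point has a "rank": an ordinal stage of the derivative in which it is isolated. -/
lemma exists_rank (hX : Scattered X) (y : X) :
    ∃ a : Ordinal, y ∈ deriv X a ∧ ∃ U : Set X, IsOpen U ∧ U ∩ deriv X a = {y} := by
  classical
  set S : Set Ordinal := {a | y ∉ DOp X (deriv X a)} with hSdef
  have hSne : S.Nonempty := by
    refine ⟨(Order.succ #(Set X)).ord, ?_⟩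
    have hfix : deriv X ((Order.succ #(Set X)).ord) ∈ Function.fixedPoints (DOp X) :=
      gfpApprox_ord_mem_fixedPoint (DOp X) (x := ⊤) le_top
    have hempty : deriv X ((Order.succ #(Set X)).ord) = ∅ := fixed_empty hX hfix
    intro hy
    have h4 := DOp_subset X _ hy
    rw [hempty] at h4
    exact h4
  set a := Ordinal.lt_wf.min S hSne with ha
  have haS : y ∉ DOp X (deriv X a) := Ordinal.lt_wf.min_mem S hSne
  have hya : y ∈ deriv X a := by
    rw [deriv, gfpApprox]
    simp only [Set.top_eq_univ, Set.inf_eq_inter, Set.iInf_eq_iInter, Set.mem_inter_iff, Set.mem_univ, true_and, Set.mem_iInter]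
    intro b hb
    by_contra hyb
    exact Ordinal.lt_wf.not_lt_min S (show b ∈ S from hyb) hb
  have hnc : y ∉ closure (deriv X a \ {y}) := fun hc => haS ⟨hya, hc⟩
  rw [mem_closure_iff] at hnc
  push_neg at hnc
  obtain ⟨U, hU, hyU, hUn⟩ := hnc
  refine ⟨a, hya, U, hU, ?_⟩
  ext z
  constructor
  · rintro ⟨hzU, hza⟩
    by_contra hzy
    exact Set.eq_empty_iff_forall_notMem.mp hUn z ⟨hzU, hza, hzy⟩
  · rintro rfl
    exact ⟨hyU, hya⟩

end ScatteredCBAux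

open ScatteredCBAux in
/-- On the homeomorphism group of a scattered space, the topology of pointwise
convergence coincides with the topology of pointwise convergence for the
discrete topology on `X`. -/
theorem pointwise_eq_discretePointwise_of_scattered
    (X : Type*) [t : TopologicalSpace X] (hX : Scattered X) :
    TopologicalSpace.induced (fun g : X ≃ₜ X => (g : X → X))
        (@Pi.topologicalSpace X (fun _ => X) (fun _ => t)) =
      TopologicalSpace.induced (fun g : X ≃ₜ X => (g : X → X))
        (@Pi.topologicalSpace X (fun _ => X) (fun _ => ⊥)) := by
  classical
  set L := TopologicalSpace.induced (fun g : X ≃ₜ X => (g : X → X))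
      (@Pi.topologicalSpace X (fun _ => X) (fun _ => t)) with hLdef
  letI : TopologicalSpace (X ≃ₜ X) := L
  have key : ∀ x y : X, IsOpen {g : X ≃ₜ X | g x = y} := by
    intro x y
    obtain ⟨a, hya, U, hU, hUa⟩ := exists_rank hX y
    have hyU : y ∈ U := by
      have hy1 : y ∈ U ∩ deriv X a := hUa ▸ rfl
      exact hy1.1
    by_cases hx : x ∈ deriv X a
    · have hset : {g : X ≃ₜ X | g x = y} =
          (fun g : X ≃ₜ X => (g : X → X)) ⁻¹' ((fun f : X → X => f x) ⁻¹' U) := by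
        ext g
        simp only [Set.mem_setOf_eq, Set.mem_preimage]
        constructor
        · rintro rfl
          exact hyU
        · intro hgU
          have hgx : x ∈ g ⁻¹' deriv X a := (deriv_eq a g).symm ▸ hx
          have hmem : g x ∈ U ∩ deriv X a := ⟨hgU, hgx⟩
          rw [hUa] at hmem
          exact hmem
      rw [hset]
      exact isOpen_induced ((continuous_apply (A := fun _ : X => X) x).isOpen_preimage U hU)
    · have hset : {g : X ≃ₜ X | g x = y} = ∅ := by
        ext g
        simp only [Set.mem_setOf_eq, Set.mem_empty_iff_false, iff_false]
        intro hgxy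
        have hgx : g x ∈ deriv X a := hgxy ▸ hya
        exact hx (preimage_deriv a g hgx)
      rw [hset]
      exact isOpen_empty
  refine le_antisymm ?_ ?_
  · -- pointwise ≤ discrete pointwise
    rw [show (@Pi.topologicalSpace X (fun _ => X) (fun _ => (⊥ : TopologicalSpace X))) =
        ⨅ x : X, TopologicalSpace.induced (fun f : X → X => f x) ⊥ from rfl,
      induced_iInf]
    refine le_iInf fun x => ?_
    rw [induced_compose, TopologicalSpace.le_def]
    intro V hV
    obtain ⟨S, -, rfl⟩ := hV
    have : ((fun f : X → X => f x) ∘ fun g : X ≃ₜ X => (g : X → X)) ⁻¹' S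
        = ⋃ y ∈ S, {g : X ≃ₜ X | g x = y} := by
      ext g
      simp [eq_comm]
    rw [this]
    exact isOpen_biUnion fun y _ => key x y
  · -- discrete pointwise ≤ pointwise
    exact induced_mono (iInf_mono fun x => induced_mono bot_le)
end

section
/- If X is a scattered Hausdorff space, then Homeo(X), endowed with the topology of pointwise convergence, is a topological group admitting a neighbourhood basis of the identity consisting of open subgroups (namely, the pointwise stabilizers of finite subsets of X). -/
noncomputable section

instance {X : Type*} [TopologicalSpace X] : Group (X ≃ₜ X) where
  mul g h := h.trans g
  one := Homeomorph.refl X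
  inv := Homeomorph.symm
  mul_assoc _ _ _ := Homeomorph.ext fun _ => rfl
  one_mul _ := Homeomorph.ext fun _ => rfl
  mul_one _ := Homeomorph.ext fun _ => rfl
  inv_mul_cancel g := Homeomorph.ext fun x => g.symm_apply_apply x

theorem scattered_key {X : Type*} [TopologicalSpace X] (hX : Scattered X) (x : X) :
    ∃ U : Set X, IsOpen U ∧ x ∈ U ∧ ∀ h : X ≃ₜ X, h x ∈ U → h x = x := by
  obtain ⟨a, ⟨g, hg⟩, U, hU, hUO⟩ := hX {y | ∃ h : X ≃ₜ X, h x = y} ⟨x, Homeomorph.refl X, rfl⟩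
  refine ⟨g.symm '' U, g.symm.isOpen_image.2 hU, ⟨a, ?_, ?_⟩, ?_⟩
  · have : a ∈ U ∩ {y | ∃ h : X ≃ₜ X, h x = y} := by rw [hUO]; rfl
    exact this.1
  · rw [← hg]; exact g.symm_apply_apply x
  · rintro h ⟨u, hu, huh⟩
    have h1 : g (h x) ∈ U := by rw [← huh, g.apply_symm_apply]; exact hu
    have h2 : g (h x) ∈ U ∩ {y | ∃ k : X ≃ₜ X, k x = y} :=
      ⟨h1, h.trans g, rfl⟩
    rw [hUO] at h2
    have : h x = g.symm a := by rw [← h2]; exact (g.symm_apply_apply _).symm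
    rw [this, ← hg, g.symm_apply_apply]

/-- If `X` is a scattered Hausdorff space, then `Homeo(X)` with the topology of
pointwise convergence is a topological group, and the pointwise stabilizers of
finite subsets form a neighbourhood basis of the identity made of open subgroups. -/
theorem homeoScattered_topologicalGroup_and_openSubgroupBasis
    (X : Type*) [TopologicalSpace X] [T2Space X] (hX : Scattered X) :
    letI : TopologicalSpace (X ≃ₜ X) :=
      TopologicalSpace.induced (fun g : X ≃ₜ X => (g : X → X)) Pi.topologicalSpace
    IsTopologicalGroup (X ≃ₜ X) ∧
      (nhds (1 : X ≃ₜ X)).HasBasis (fun _ : Finset X => True)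
        (fun F => {g : X ≃ₜ X | ∀ x ∈ F, g x = x}) ∧
      ∀ F : Finset X, ∃ H : Subgroup (X ≃ₜ X),
        (H : Set (X ≃ₜ X)) = {g : X ≃ₜ X | ∀ x ∈ F, g x = x} ∧
        IsOpen (H : Set (X ≃ₜ X)) := by
  classical
  letI : TopologicalSpace (X ≃ₜ X) :=
    TopologicalSpace.induced (fun g : X ≃ₜ X => (g : X → X)) Pi.topologicalSpace
  choose U hUopen hxU hUfix using fun x => scattered_key hX x
  -- evaluation maps are continuous
  have hev : ∀ x : X, Continuous fun g : X ≃ₜ X => g x := fun x =>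
    (continuous_apply x).comp continuous_induced_dom
  -- stabilizers are open
  have hstab : ∀ F : Finset X, IsOpen {g : X ≃ₜ X | ∀ x ∈ F, g x = x} := by
    intro F
    have : {g : X ≃ₜ X | ∀ x ∈ F, g x = x} = ⋂ x ∈ F, (fun g : X ≃ₜ X => g x) ⁻¹' (U x) := by
      ext g
      simp only [Set.mem_setOf_eq, Set.mem_iInter, Set.mem_preimage]
      refine ⟨fun h x hx => ?_, fun h x hx => hUfix x g (h x hx)⟩
      rw [h x hx]; exact hxU x
    rw [this]
    exact isOpen_biInter_finset fun x _ => (hUopen x).preimage (hev x)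
  -- the subgroups
  have hsub : ∀ F : Finset X, ∃ H : Subgroup (X ≃ₜ X),
      (H : Set (X ≃ₜ X)) = {g : X ≃ₜ X | ∀ x ∈ F, g x = x} ∧
      IsOpen (H : Set (X ≃ₜ X)) := by
    intro F
    refine ⟨{ carrier := {g : X ≃ₜ X | ∀ x ∈ F, g x = x}
              mul_mem' := ?_, one_mem' := ?_, inv_mem' := ?_ }, rfl, hstab F⟩
    · intro a b ha hb x hx
      show a (b x) = x
      rw [hb x hx, ha x hx]
    · intro x _; rfl
    · intro a ha x hx
      show a.symm x = x
      conv_lhs => rw [← ha x hx]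
      exact a.symm_apply_apply x
  -- stabilizers are neighbourhoods of 1
  have hmem : ∀ F : Finset X, {g : X ≃ₜ X | ∀ x ∈ F, g x = x} ∈ nhds (1 : X ≃ₜ X) :=
    fun F => (hstab F).mem_nhds (fun x _ => rfl)
  refine ⟨?_, ?_, hsub⟩
  · -- topological group
    have hm : ContinuousMul (X ≃ₜ X) := by
      refine ⟨continuous_induced_rng.2 (continuous_pi fun x => ?_)⟩
      rw [continuous_iff_continuousAt]
      rintro ⟨g, h⟩
      have hc : ContinuousAt (fun p : (X ≃ₜ X) × (X ≃ₜ X) => p.1 (h x)) (g, h) :=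
        ((hev (h x)).comp continuous_fst).continuousAt
      refine hc.congr (Filter.eventuallyEq_of_mem
        (s := (fun p : (X ≃ₜ X) × (X ≃ₜ X) => p.2 x) ⁻¹' U (h x)) ?_ ?_)
      · exact (((hUopen (h x)).preimage (hev x)).preimage continuous_snd).mem_nhds
          (show h x ∈ U (h x) from hxU (h x))
      · rintro ⟨g', h'⟩ hp
        have hval : (h.symm.trans h') (h x) = h' x := by
          show h' (h.symm (h x)) = h' x
          rw [h.symm_apply_apply]
        have hmem' : (h.symm.trans h') (h x) ∈ U (h x) := by
          rw [hval]; exact hp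
        have he : h' x = h x := by
          have := hUfix (h x) (h.symm.trans h') hmem'
          rwa [hval] at this
        show g' (h x) = g' (h' x)
        rw [he]
    have hi : ContinuousInv (X ≃ₜ X) := by
      refine ⟨continuous_induced_rng.2 (continuous_pi fun x => ?_)⟩
      rw [continuous_iff_continuousAt]
      intro g
      have hc : ContinuousAt (fun _ : X ≃ₜ X => g.symm x) g := continuousAt_const
      refine hc.congr (Filter.eventuallyEq_of_mem
        (s := (fun g' : X ≃ₜ X => g' (g.symm x)) ⁻¹' U x) ?_ ?_)
      · refine (((hUopen x).preimage (hev (g.symm x)))).mem_nhds ?_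
        show g (g.symm x) ∈ U x
        rw [g.apply_symm_apply]; exact hxU x
      · intro g' hp
        have : (g.symm.trans g') x ∈ U x := by
          show g' (g.symm x) ∈ U x; exact hp
        have he : g' (g.symm x) = x := hUfix x (g.symm.trans g') this
        show g.symm x = g'.symm x
        have := congrArg g'.symm he
        rw [g'.symm_apply_apply] at this
        exact this
    exact { continuous_mul := hm.continuous_mul, continuous_inv := hi.continuous_inv }
  · -- basis
    rw [Filter.hasBasis_iff]
    intro t
    constructor
    · intro ht
      rw [mem_nhds_induced] at ht
      obtain ⟨s, hs, hst⟩ := ht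
      rw [mem_nhds_iff] at hs
      obtain ⟨W, hWs, hW, hidW⟩ := hs
      obtain ⟨I, u, hu, hpi⟩ := isOpen_pi_iff.1 hW _ hidW
      refine ⟨I, trivial, fun g hg => hst ?_⟩
      refine Set.mem_preimage.2 (hWs (hpi ?_))
      intro i hi
      have : g i = i := hg i hi
      rw [this]
      exact (hu i hi).2
    · rintro ⟨F, -, hF⟩
      exact Filter.mem_of_superset (hmem F) hF
end
end

section
/- Let g : ω₁ → ω₁ be a continuous map (for the order topology) all of whose fibers are countable. Then the set of fixed points of g is closed and unbounded (cofinal) in ω₁. -/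
noncomputable section
open Ordinal Set Topology

/-- The first uncountable ordinal `ω₁`, as a type, endowed with the order topology. -/
def Omega1 : Type 1 := Set.Iio (Ordinal.omega 1)

instance : LinearOrder Omega1 := inferInstanceAs (LinearOrder (Set.Iio (Ordinal.omega 1)))
instance : TopologicalSpace Omega1 := Preorder.topology Omega1
instance : OrderTopology Omega1 := ⟨rfl⟩

/-- The underlying ordinal of a point of `ω₁`. -/
def Omega1.toOrdinal (x : Omega1) : Ordinal := Subtype.val x

theorem Omega1.toOrdinal_lt (x : Omega1) : x.toOrdinal < Ordinal.omega 1 := Subtype.prop x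

/-- Build a point of `ω₁` from a countable ordinal. -/
def Omega1.mk (o : Ordinal) (h : o < Ordinal.omega 1) : Omega1 := Subtype.mk o h

/-- The topology of pointwise convergence on the homeomorphism group of `ω₁`. -/
instance : TopologicalSpace (Omega1 ≃ₜ Omega1) :=
  TopologicalSpace.induced (fun g : Omega1 ≃ₜ Omega1 => (g : Omega1 → Omega1))
    Pi.topologicalSpace

theorem Omega1.le_iff {x y : Omega1} : x ≤ y ↔ x.toOrdinal ≤ y.toOrdinal := Iff.rfl
theorem Omega1.lt_iff {x y : Omega1} : x < y ↔ x.toOrdinal < y.toOrdinal := Iff.rfl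

/-- Countable subsets of ω₁ are strictly bounded. -/
theorem Omega1.bounded_of_countable {s : Set Omega1} (hs : s.Countable) :
    ∃ b : Omega1, ∀ x ∈ s, x < b := by
  rcases s.eq_empty_or_nonempty with rfl | hne
  · exact ⟨Omega1.mk 0 (Ordinal.omega_pos 1), by simp⟩
  obtain ⟨f, rfl⟩ := hs.exists_eq_range hne
  set o : Ordinal := ⨆ n, (f n).toOrdinal + 1 with ho
  have hlt : o < Ordinal.omega 1 := by
    rw [← Cardinal.ord_aleph]
    rw [Cardinal.ord_aleph]; exact Ordinal.iSup_lt_omega_one fun n => by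
      exact (Cardinal.isSuccLimit_omega 1).succ_lt (f n).toOrdinal_lt
  refine ⟨Omega1.mk o hlt, ?_⟩
  rintro x ⟨n, rfl⟩
  have : (f n).toOrdinal + 1 ≤ o := Ordinal.le_iSup (fun n => (f n).toOrdinal + 1) n
  exact Omega1.lt_iff.2 (lt_of_lt_of_le (lt_add_one _) this)

theorem Omega1.countable_Iic (a : Omega1) : (Set.Iic a).Countable := by
  have h1 : (Set.Iic a.toOrdinal).Countable := by
    refine Set.Countable.mono (fun x hx => Set.mem_Iio.2 (Order.lt_add_one_iff.2 (Set.mem_Iic.1 hx))) ?_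
    rw [Cardinal.countable_iff_lt_aleph_one, mk_Iio_ordinal, Cardinal.lift_lt_aleph_one]
    have h := (Cardinal.isSuccLimit_omega 1).succ_lt a.toOrdinal_lt
    rwa [← Cardinal.ord_aleph, Cardinal.lt_ord] at h
  have : Set.Iic a = Omega1.toOrdinal ⁻¹' Set.Iic a.toOrdinal := rfl
  rw [this]
  exact h1.preimage Subtype.val_injective


/-- The fixed-point set of a continuous self-map of `ω₁` with countable fibers
is closed and unbounded. -/
theorem fixedPoints_closed_unbounded (g : Omega1 → Omega1) (hg : Continuous g)
    (hfib : ∀ y : Omega1, (g ⁻¹' {y}).Countable) :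
    IsClosed {x : Omega1 | g x = x} ∧
      ∀ α : Omega1, ∃ β : Omega1, g β = β ∧ α ≤ β := by
  constructor
  · exact isClosed_eq hg continuous_id
  intro α
  -- step function
  have hstep : ∀ a : Omega1, ∃ b : Omega1, g a ≤ b ∧ a ≤ b ∧ ∀ x, g x ≤ a → x < b := by
    intro a
    have hc : (g ⁻¹' Set.Iic a).Countable := by
      rw [← Set.biUnion_preimage_singleton]
      exact (Omega1.countable_Iic a).biUnion fun y _ => hfib y
    obtain ⟨b, hb⟩ := Omega1.bounded_of_countable hc
    exact ⟨max b (max a (g a)), le_max_of_le_right (le_max_right _ _),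
      le_max_of_le_right (le_max_left _ _),
      fun x hx => lt_of_lt_of_le (hb x hx) (le_max_left _ _)⟩
  choose step h1 h2 h3 using hstep
  set A : ℕ → Omega1 := fun n => step^[n] α with hA
  have hAsucc : ∀ n, A (n + 1) = step (A n) := fun n => Function.iterate_succ_apply' _ _ _
  set o : Ordinal := ⨆ n, (A n).toOrdinal with ho
  have hlt : o < Ordinal.omega 1 := by
    rw [← Cardinal.ord_aleph]
    rw [Cardinal.ord_aleph]; exact Ordinal.iSup_lt_omega_one fun n => by
      exact (A n).toOrdinal_lt
  set β : Omega1 := Omega1.mk o hlt with hβ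
  have hAle : ∀ n, A n ≤ β := fun n =>
    Omega1.le_iff.2 (Ordinal.le_iSup (fun n => (A n).toOrdinal) n)
  have hlub : IsLUB (Set.range A) β := by
    constructor
    · rintro x ⟨n, rfl⟩; exact hAle n
    · rintro b hb
      exact Omega1.le_iff.2 (Ordinal.iSup_le fun n => Omega1.le_iff.1 (hb ⟨n, rfl⟩))
  have hβmem : β ∈ closure (Set.range A) := hlub.mem_closure (Set.range_nonempty A)
  have hgle : g β ≤ β := by
    have hSclosed : IsClosed (g ⁻¹' Set.Iic β) := IsClosed.preimage hg isClosed_Iic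
    have hsub : Set.range A ⊆ g ⁻¹' Set.Iic β := by
      rintro x ⟨n, rfl⟩
      have : g (A n) ≤ A (n + 1) := by rw [hAsucc]; exact h1 (A n)
      exact this.trans (hAle (n + 1))
    exact closure_minimal hsub hSclosed hβmem
  have hgge : β ≤ g β := by
    refine hlub.2 ?_
    rintro x ⟨n, rfl⟩
    by_contra h
    push_neg at h
    have : β < A (n + 1) := by rw [hAsucc]; exact h3 (A n) β h.le
    exact absurd (hAle (n + 1)) (not_le.2 this)
  exact ⟨β, le_antisymm hgle hgge, (show A 0 = α from rfl) ▸ hAle 0⟩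
end
end

section
/- Let A be a set of homeomorphisms of ω₁ such that for every x ∈ ω₁ the orbit set {g(x) : g ∈ A} is countable. Then the set of common fixed points ⋂_{g ∈ A} Fix(g) is closed and unbounded in ω₁. -/
noncomputable section
open Ordinal Set Topology

namespace Omega1

lemma lt_iff_s4 {x y : Omega1} : x < y ↔ x.toOrdinal < y.toOrdinal := Iff.rfl
lemma le_iff_s4 {x y : Omega1} : x ≤ y ↔ x.toOrdinal ≤ y.toOrdinal := Iff.rfl
lemma toOrdinal_injective : Function.Injective Omega1.toOrdinal := Subtype.val_injective
@[simp] lemma mk_toOrdinal (o : Ordinal) (h : o < Ordinal.omega 1) :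
    (Omega1.mk o h).toOrdinal = o := rfl
@[ext] lemma ext {x y : Omega1} (h : x.toOrdinal = y.toOrdinal) : x = y := toOrdinal_injective h

lemma omega1_isLimit : Order.IsSuccLimit (Ordinal.omega 1) := by
  exact Cardinal.isSuccLimit_omega 1

def zero : Omega1 := Omega1.mk 0 (Ordinal.omega_pos 1)

lemma zero_le (x : Omega1) : zero ≤ x := by
  rw [le_iff_s4]; exact _root_.zero_le

def osucc (x : Omega1) : Omega1 :=
  Omega1.mk (x.toOrdinal + 1) (by
    rw [Ordinal.add_one_eq_succ]
    exact omega1_isLimit.succ_lt x.toOrdinal_lt)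

lemma osucc_toOrdinal (x : Omega1) : (osucc x).toOrdinal = x.toOrdinal + 1 := rfl

lemma lt_osucc (x : Omega1) : x < osucc x := by
  rw [lt_iff_s4, osucc_toOrdinal]; exact lt_add_one _

lemma lt_osucc_iff {x y : Omega1} : y < osucc x ↔ y ≤ x := by
  rw [lt_iff_s4, le_iff_s4, osucc_toOrdinal, Ordinal.add_one_eq_succ, Order.lt_succ_iff]

lemma card_le_of_lt {o : Ordinal.{0}} (h : o < Ordinal.omega 1) : o.card ≤ Cardinal.aleph0 := by
  rw [← Cardinal.ord_aleph, Cardinal.lt_ord] at h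
  have h1 : Cardinal.aleph 1 = Order.succ Cardinal.aleph0.{0} := by
    rw [← Cardinal.aleph_zero, ← Cardinal.aleph_succ, Order.succ_eq_add_one, zero_add]
  rw [h1, Order.lt_succ_iff] at h
  exact h

lemma countable_Iio_ordinal {o : Ordinal.{0}} (h : o < Ordinal.omega 1) :
    (Set.Iio o).Countable := by
  rw [← Set.countable_coe_iff, ← Cardinal.mk_le_aleph0_iff, Ordinal.mk_Iio_ordinal]
  rw [← Cardinal.lift_aleph0.{1,0}]
  exact Cardinal.lift_le.2 (card_le_of_lt h)

lemma countable_Iio (x : Omega1) : (Set.Iio x).Countable := by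
  have : Set.Iio x = Omega1.toOrdinal ⁻¹' (Set.Iio x.toOrdinal) := rfl
  rw [this]
  exact (countable_Iio_ordinal x.toOrdinal_lt).preimage toOrdinal_injective

lemma countable_Iic_s4 (x : Omega1) : (Set.Iic x).Countable := by
  have : Set.Iic x ⊆ Set.Iio (osucc x) := fun y hy => lt_osucc_iff.2 hy
  exact (countable_Iio (osucc x)).mono this

lemma iSup_sequence_lt_omega1' (f : ℕ → Ordinal.{0}) (h : ∀ n, f n < (Cardinal.aleph 1).ord) :
    ⨆ n, f n < (Cardinal.aleph 1).ord := by
  simp only [Cardinal.ord_aleph] at h ⊢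
  exact Ordinal.iSup_lt_omega_one h

lemma exists_ub {S : Set Omega1} (hS : S.Countable) : ∃ b : Omega1, ∀ y ∈ S, y ≤ b := by
  rcases S.eq_empty_or_nonempty with rfl | hne
  · exact ⟨zero, by simp⟩
  obtain ⟨f, rfl⟩ := hS.exists_eq_range hne
  have hlt : ∀ n, (f n).toOrdinal < (Cardinal.aleph 1).ord := by
    intro n; rw [Cardinal.ord_aleph]; exact (f n).toOrdinal_lt
  have hsup : (⨆ n, (f n).toOrdinal) < Ordinal.omega 1 := by
    have := Omega1.iSup_sequence_lt_omega1' (fun n => (f n).toOrdinal) hlt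
    rwa [Cardinal.ord_aleph] at this
  refine ⟨Omega1.mk _ hsup, ?_⟩
  rintro y ⟨n, rfl⟩
  rw [le_iff_s4, mk_toOrdinal]
  exact Ordinal.le_iSup (fun n => (f n).toOrdinal) n

def supSeq (s : ℕ → Omega1) : Omega1 :=
  Omega1.mk (⨆ n, (s n).toOrdinal) (by
    have hlt : ∀ n, (s n).toOrdinal < (Cardinal.aleph 1).ord := by
      intro n; rw [Cardinal.ord_aleph]; exact (s n).toOrdinal_lt
    have := Omega1.iSup_sequence_lt_omega1' (fun n => (s n).toOrdinal) hlt
    rwa [Cardinal.ord_aleph] at this)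

lemma le_supSeq (s : ℕ → Omega1) (n : ℕ) : s n ≤ supSeq s := by
  rw [le_iff_s4]; exact Ordinal.le_iSup (fun n => (s n).toOrdinal) n

lemma lt_supSeq {s : ℕ → Omega1} (h : ∀ n, s n < s (n + 1)) (n : ℕ) : s n < supSeq s :=
  lt_of_lt_of_le (h n) (le_supSeq s (n + 1))

lemma exists_lt_of_lt_supSeq {s : ℕ → Omega1} {b : Omega1} (h : b < supSeq s) :
    ∃ n, b < s n := by
  rw [lt_iff_s4] at h
  by_contra hc
  push_neg at hc
  have : supSeq s ≤ b := by
    rw [le_iff_s4]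
    refine Ordinal.iSup_le fun n => ?_
    exact le_iff_s4.1 (hc n)
  exact absurd h (not_lt.2 (le_iff_s4.1 this))

end Omega1
namespace Omega1

lemma isOpen_Iic (x : Omega1) : IsOpen (Set.Iic x) := by
  have : Set.Iic x = Set.Iio (osucc x) := by
    ext y; simp [lt_osucc_iff]
  rw [this]; exact isOpen_Iio

lemma exists_Ioc_subset {x : Omega1} (hx : zero < x) {U : Set Omega1}
    (hU : U ∈ nhds x) : ∃ l < x, Set.Ioc l x ⊆ U := by
  rw [mem_nhds_iff_exists_Ioo_subset' ⟨zero, hx⟩ ⟨osucc x, lt_osucc x⟩] at hU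
  obtain ⟨l, u, hmem, hsub⟩ := hU
  exact ⟨l, hmem.1, fun y hy => hsub ⟨hy.1, lt_of_le_of_lt hy.2 hmem.2⟩⟩

/-- accumulation from below -/
def AccB (x : Omega1) (S : Set Omega1) : Prop :=
  ∀ b < x, ∃ y ∈ S, b < y ∧ y < x

lemma AccB.mono {x : Omega1} {S T : Set Omega1} (hST : S ⊆ T) (h : AccB x S) : AccB x T :=
  fun b hb => by obtain ⟨y, hy, h1, h2⟩ := h b hb; exact ⟨y, hST hy, h1, h2⟩

lemma tendsto_of_cofinal {y : ℕ → Omega1} {x : Omega1} (hlt : ∀ k, y k < x)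
    (hcof : ∀ b < x, ∃ j, ∀ k ≥ j, b < y k) :
    Filter.Tendsto y Filter.atTop (nhds x) := by
  rw [tendsto_order]
  constructor
  · intro b hb
    obtain ⟨j, hj⟩ := hcof b hb
    exact Filter.eventually_atTop.2 ⟨j, hj⟩
  · intro b hb
    exact Filter.Eventually.of_forall fun k => lt_trans (hlt k) hb

lemma AccB.exists_tendsto {x : Omega1} {S : Set Omega1} (hx : zero < x) (h : AccB x S) :
    ∃ y : ℕ → Omega1, (∀ k, y k ∈ S ∧ y k < x) ∧
      Filter.Tendsto y Filter.atTop (nhds x) := by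
  have hne : (Set.Iio x).Nonempty := ⟨zero, hx⟩
  obtain ⟨z, hz⟩ := (countable_Iio x).exists_eq_range hne
  have hzlt : ∀ k, z k < x := fun k => by
    have : z k ∈ Set.Iio x := hz ▸ Set.mem_range_self k
    exact this
  -- running max
  let m : ℕ → Omega1 := fun k => Nat.rec (z 0) (fun k mk => max mk (z (k + 1))) k
  have hm_lt : ∀ k, m k < x := by
    intro k; induction k with
    | zero => exact hzlt 0
    | succ k ih => exact max_lt ih (hzlt (k + 1))
  have hm_ge : ∀ j k, j ≤ k → z j ≤ m k := by
    intro j k hjk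
    induction k with
    | zero => simp at hjk; subst hjk; exact le_refl _
    | succ k ih =>
      rcases Nat.lt_or_ge j (k + 1) with h' | h'
      · exact le_trans (ih (Nat.lt_succ_iff.1 h')) (le_max_left _ _)
      · have : j = k + 1 := le_antisymm hjk h'
        subst this; exact le_max_right _ _
  choose y hyS hy1 hy2 using fun k => h (m k) (hm_lt k)
  refine ⟨y, fun k => ⟨hyS k, hy2 k⟩, ?_⟩
  apply tendsto_of_cofinal hy2
  intro b hb
  have : b ∈ Set.Iio x := hb
  rw [hz] at this
  obtain ⟨j, hj⟩ := this
  refine ⟨j, fun k hk => ?_⟩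
  calc b = z j := hj.symm
  _ ≤ m k := hm_ge j k hk
  _ < y k := hy1 k

lemma AccB.map {x : Omega1} {S : Set Omega1} {e : Omega1 → Omega1}
    (he : Continuous e) (hinj : Function.Injective e)
    (hx : zero < x) (h : AccB x S) :
    zero < e x ∧ AccB (e x) (e '' S) := by
  obtain ⟨y, hy, hten⟩ := h.exists_tendsto hx
  have hety : Filter.Tendsto (fun k => e (y k)) Filter.atTop (nhds (e x)) :=
    (he.tendsto x).comp hten
  have hne : ∀ k, e (y k) ≠ e x := fun k h' => (hy k).2.ne (hinj h')
  have key : ∀ b < e x, ∃ k, b < e (y k) ∧ e (y k) < e x := by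
    intro b hb
    have hU : Set.Ioo b (osucc (e x)) ∈ nhds (e x) :=
      (isOpen_Ioo).mem_nhds ⟨hb, lt_osucc _⟩
    obtain ⟨k, hk⟩ := (hety.eventually_mem hU).exists
    exact ⟨k, hk.1, lt_of_le_of_ne (lt_osucc_iff.1 hk.2) (hne k)⟩
  have h0 : zero < e x := by
    have hU : Set.Iic (e x) ∈ nhds (e x) := (isOpen_Iic (e x)).mem_nhds (Set.mem_Iic.2 (le_refl _))
    obtain ⟨k, hk⟩ := (hety.eventually_mem hU).exists
    exact lt_of_le_of_lt (zero_le _) (lt_of_le_of_ne hk (hne k))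
  refine ⟨h0, fun b hb => ?_⟩
  obtain ⟨k, h1, h2⟩ := key b hb
  exact ⟨e (y k), Set.mem_image_of_mem e (hy k).1, h1, h2⟩

end Omega1
namespace Omega1

def Unbdd (C : Set Omega1) : Prop := ∀ α, ∃ β ∈ C, α < β
def ClosedS (C : Set Omega1) : Prop := ∀ x, zero < x → AccB x C → x ∈ C
def IsClub (C : Set Omega1) : Prop := ClosedS C ∧ Unbdd C
def Stat (S : Set Omega1) : Prop := ∀ C, IsClub C → (S ∩ C).Nonempty

lemma diag_unbdd (C : Omega1 → Set Omega1) (hC : ∀ γ, IsClub (C γ)) :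
    Unbdd {β : Omega1 | ∀ γ < β, β ∈ C γ} := by
  intro α
  choose f hfm hflt using fun γ => (hC γ).2
  have hT : ∀ x : Omega1, ∃ t, x < t ∧ ∀ γ < x, f γ x < t := by
    intro x
    obtain ⟨b, hb⟩ := exists_ub ((countable_Iio x).image (fun γ => f γ x))
    refine ⟨osucc (max b x), lt_of_le_of_lt (le_max_right b x) (lt_osucc _), fun γ hγ => ?_⟩
    exact lt_of_le_of_lt (le_trans (hb _ (Set.mem_image_of_mem _ hγ)) (le_max_left b x))
      (lt_osucc _)
  choose T hT1 hT2 using hT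
  set s : ℕ → Omega1 := fun n => T^[n] (osucc α) with hs
  have hstep : ∀ n, s (n + 1) = T (s n) := fun n => Function.iterate_succ_apply' T n _
  have hmono : StrictMono s := strictMono_nat_of_lt_succ (fun n => (hstep n) ▸ hT1 (s n))
  set β := supSeq s with hβ
  have hsltβ : ∀ n, s n < β := lt_supSeq (fun n => hmono (Nat.lt_succ_self n))
  have hαβ : α < β := lt_trans (lt_osucc α) (hsltβ 0)
  refine ⟨β, ?_, hαβ⟩
  intro γ hγ
  refine (hC γ).1 β (lt_of_le_of_lt (zero_le α) hαβ) ?_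
  intro b hb
  obtain ⟨n1, hn1⟩ := exists_lt_of_lt_supSeq hb
  obtain ⟨n2, hn2⟩ := exists_lt_of_lt_supSeq hγ
  set n := max n1 n2
  have hbn : b < s n := lt_of_lt_of_le hn1 (hmono.monotone (le_max_left n1 n2))
  have hγn : γ < s n := lt_of_lt_of_le hn2 (hmono.monotone (le_max_right n1 n2))
  refine ⟨f γ (s n), hfm γ (s n), lt_trans hbn (hflt γ (s n)), ?_⟩
  calc f γ (s n) < T (s n) := hT2 (s n) γ hγn
  _ = s (n + 1) := (hstep n).symm
  _ < β := hsltβ (n + 1)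

lemma isClub_Ioi (α : Omega1) : IsClub (Set.Ioi α) := by
  constructor
  · intro x hx hAcc
    rcases lt_or_ge α x with h | h
    · exact h
    · obtain ⟨y, hy, _, hyx⟩ := hAcc zero hx
      exact absurd (lt_trans hy (lt_of_lt_of_le hyx h)) (lt_irrefl α)
  · intro α₂
    exact ⟨osucc (max α α₂), lt_of_le_of_lt (le_max_left _ _) (lt_osucc _),
      lt_of_le_of_lt (le_max_right _ _) (lt_osucc _)⟩

lemma Stat.unbdd {S : Set Omega1} (hS : Stat S) : Unbdd S := by
  intro α
  obtain ⟨β, hβS, hβ⟩ := hS (Set.Ioi α) (isClub_Ioi α)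
  exact ⟨β, hβS, hβ⟩

lemma club_inter_unbdd {C₁ C₂ : Set Omega1} (h1 : IsClub C₁) (h2 : IsClub C₂) :
    Unbdd (C₁ ∩ C₂) := by
  intro α
  set C : Omega1 → Set Omega1 := fun γ => if γ = zero then C₁ else C₂ with hC
  have hCclub : ∀ γ, IsClub (C γ) := by
    intro γ; by_cases h : γ = zero <;> simp [hC, h, h1, h2]
  obtain ⟨β, hβ, hαβ⟩ := diag_unbdd C hCclub (max α (osucc zero))
  have hβ0 : zero < β := lt_of_le_of_lt (zero_le _) (lt_of_le_of_lt (le_max_right _ _) hαβ)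
  have hβ1 : osucc zero < β := lt_of_le_of_lt (le_max_right _ _) hαβ
  refine ⟨β, ⟨?_, ?_⟩, lt_of_le_of_lt (le_max_left _ _) hαβ⟩
  · have := hβ zero hβ0; simpa [hC] using this
  · have := hβ (osucc zero) hβ1
    have hne : osucc zero ≠ zero := ne_of_gt (lt_osucc zero)
    simpa [hC, hne] using this

lemma IsClub.stat {C : Set Omega1} (h : IsClub C) : Stat C := by
  intro C' hC'
  obtain ⟨β, hβ, _⟩ := club_inter_unbdd h hC' zero
  exact ⟨β, hβ⟩

lemma fodor {S : Set Omega1} (hS : Stat S) {f : Omega1 → Omega1}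
    (hf : ∀ β ∈ S, f β < β) : ∃ c, Stat {β | β ∈ S ∧ f β = c} := by
  by_contra hcon
  push_neg at hcon
  have hC : ∀ c, ∃ C, IsClub C ∧ ({β | β ∈ S ∧ f β = c} ∩ C) = ∅ := by
    intro c
    have h := hcon c
    unfold Stat at h
    push_neg at h
    obtain ⟨C, hC1, hC2⟩ := h
    exact ⟨C, hC1, hC2⟩
  choose C hC1 hC2 using hC
  have hΔclosed : ClosedS {β : Omega1 | ∀ γ < β, β ∈ C γ} := by
    intro x hx hAcc γ hγ
    refine (hC1 γ).1 x hx ?_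
    intro b hb
    obtain ⟨y, hy, hby, hyx⟩ := hAcc (max b γ) (max_lt hb hγ)
    exact ⟨y, hy γ (lt_of_le_of_lt (le_max_right b γ) hby),
      lt_of_le_of_lt (le_max_left b γ) hby, hyx⟩
  obtain ⟨β, hβS, hβΔ⟩ := hS _ ⟨hΔclosed, diag_unbdd C hC1⟩
  have h2 : β ∈ C (f β) := hβΔ (f β) (hf β hβS)
  have hmem : β ∈ {b | b ∈ S ∧ f b = f β} ∩ C (f β) := ⟨⟨hβS, rfl⟩, h2⟩
  rw [hC2 (f β)] at hmem
  exact hmem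

end Omega1
namespace Omega1

lemma add_lt_add_left' {a b c : Ordinal.{0}} (h : b < c) : a + b < a + c := by
  rwa [add_lt_add_iff_left]

lemma add_lt_add_cancel {a b c : Ordinal.{0}} (h : a + b < a + c) : b < c := by
  rwa [add_lt_add_iff_left] at h

lemma omega0_opow_lt_omega1 : ∀ ρ : Ordinal.{0}, ρ < Ordinal.omega 1 →
    Ordinal.omega0 ^ ρ < Ordinal.omega 1 := by
  intro ρ
  induction ρ using Ordinal.induction with
  | _ ρ IH =>
    intro hρ
    rcases Ordinal.zero_or_succ_or_isSuccLimit ρ with h0 | ⟨σ, rfl⟩ | hlim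
    · subst h0
      rw [Ordinal.opow_zero]
      exact lt_trans Ordinal.one_lt_omega0 Ordinal.omega0_lt_omega_one
    · have hσρ : σ < Order.succ σ := Order.lt_succ σ
      have hσ1 : σ < Ordinal.omega 1 := lt_trans hσρ hρ
      have h1 : Ordinal.omega0 ^ σ < Ordinal.omega 1 := IH σ hσρ hσ1
      rw [Ordinal.opow_succ]
      rw [← Cardinal.ord_aleph, Cardinal.lt_ord]
      rw [Ordinal.card_mul]
      have h2 : (Ordinal.omega0 ^ σ).card ≤ Cardinal.aleph0 := card_le_of_lt h1
      calc (Ordinal.omega0 ^ σ).card * Ordinal.omega0.card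
          ≤ Cardinal.aleph0 * Cardinal.aleph0 := by
            rw [Ordinal.card_omega0]
            exact mul_le_mul_left h2 _
      _ = Cardinal.aleph0 := Cardinal.aleph0_mul_aleph0
      _ < Cardinal.aleph 1 := Cardinal.aleph0_lt_aleph_one
    · have hne : (Set.Iio ρ).Nonempty := ⟨0, hlim.pos⟩
      obtain ⟨z, hz⟩ := (countable_Iio_ordinal hρ).exists_eq_range hne
      have hzlt : ∀ n, z n < ρ := fun n => by
        have : z n ∈ Set.Iio ρ := hz ▸ Set.mem_range_self n
        exact this
      set b := ⨆ n, Ordinal.omega0 ^ (z n) with hb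
      have hblt : b < Ordinal.omega 1 := by
        have := Omega1.iSup_sequence_lt_omega1' (fun n => Ordinal.omega0 ^ (z n))
          (fun n => by
            rw [Cardinal.ord_aleph]
            exact IH (z n) (hzlt n) (lt_trans (hzlt n) hρ))
        rwa [Cardinal.ord_aleph] at this
      refine lt_of_le_of_lt ?_ hblt
      rw [Ordinal.opow_le_of_isSuccLimit Ordinal.omega0_ne_zero hlim]
      intro σ hσ
      have : σ ∈ Set.Iio ρ := hσ
      rw [hz] at this
      obtain ⟨n, rfl⟩ := this
      exact Ordinal.le_iSup (fun n => Ordinal.omega0 ^ (z n)) n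

lemma prin_aux {m η ρ σ : Ordinal.{0}} (hm : m < η + Ordinal.omega0 ^ ρ) (hσρ : σ < ρ) :
    m + Ordinal.omega0 ^ σ < η + Ordinal.omega0 ^ ρ := by
  rcases le_or_gt m η with h | h
  · calc m + Ordinal.omega0 ^ σ ≤ η + Ordinal.omega0 ^ σ := add_le_add_left h _
    _ < η + Ordinal.omega0 ^ ρ :=
        add_lt_add_left' ((Ordinal.opow_lt_opow_iff_right Ordinal.one_lt_omega0).2 hσρ)
  · have hm' : η + (m - η) = m := Ordinal.add_sub_cancel_of_le h.le
    have hξ : m - η < Ordinal.omega0 ^ ρ := by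
      apply add_lt_add_cancel (a := η)
      rw [hm']; exact hm
    calc m + Ordinal.omega0 ^ σ = η + ((m - η) + Ordinal.omega0 ^ σ) := by
          rw [← add_assoc, hm']
    _ < η + Ordinal.omega0 ^ ρ := add_lt_add_left'
        ((Ordinal.principal_add_omega0_opow ρ) hξ
          ((Ordinal.opow_lt_opow_iff_right Ordinal.one_lt_omega0).2 hσρ))

/-- iterated Cantor–Bendixson derivative (rank predicate) -/
def Dset (X : Set Omega1) : Ordinal.{0} → Set Omega1 := fun o =>
  {x | x ∈ X ∧ ∀ o' < o, zero < x ∧ AccB x (Dset X o')}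
termination_by o => o
decreasing_by exact ‹_›

lemma Dset_eq (X : Set Omega1) (o : Ordinal.{0}) :
    Dset X o = {x | x ∈ X ∧ ∀ o' < o, zero < x ∧ AccB x (Dset X o')} := by
  rw [Dset]

lemma Dset_subset (X : Set Omega1) (o : Ordinal.{0}) : Dset X o ⊆ X := by
  rw [Dset_eq]; exact fun x hx => hx.1

lemma Dset_mono {X Y : Set Omega1} (hXY : X ⊆ Y) : ∀ o : Ordinal.{0}, Dset X o ⊆ Dset Y o := by
  intro o
  induction o using Ordinal.induction with
  | _ o IH =>
    intro x hx
    rw [Dset_eq] at hx ⊢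
    refine ⟨hXY hx.1, fun o' ho' => ?_⟩
    obtain ⟨h0, hAcc⟩ := hx.2 o' ho'
    exact ⟨h0, hAcc.mono (IH o' ho')⟩

lemma Dset_le {X : Set Omega1} {x : Omega1} : ∀ {o : Ordinal.{0}}, x ∈ Dset X o →
    o ≤ x.toOrdinal := by
  intro o
  induction o using Ordinal.induction generalizing x with
  | _ o IH =>
    intro hx
    rw [Dset_eq] at hx
    by_contra hcon
    push_neg at hcon
    have h := hx.2 x.toOrdinal hcon
    obtain ⟨y, hy, h1, h2⟩ := h.2 zero h.1
    have := IH x.toOrdinal hcon hy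
    exact absurd (lt_of_le_of_lt this (lt_iff_s4.1 h2)) (lt_irrefl _)

lemma Dset_map {e : Omega1 → Omega1} (he : Continuous e) (hinj : Function.Injective e)
    {X : Set Omega1} : ∀ {o : Ordinal.{0}} {x : Omega1}, x ∈ Dset X o →
    e x ∈ Dset (e '' X) o := by
  intro o
  induction o using Ordinal.induction with
  | _ o IH =>
    intro x hx
    rw [Dset_eq] at hx ⊢
    refine ⟨Set.mem_image_of_mem e hx.1, fun o' ho' => ?_⟩
    obtain ⟨h0, hAcc⟩ := hx.2 o' ho'
    obtain ⟨h0', hAcc'⟩ := hAcc.map he hinj h0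
    refine ⟨h0', hAcc'.mono ?_⟩
    rintro z ⟨w, hw, rfl⟩
    exact IH o' ho' hw

lemma Dset_opow : ∀ (ρ : Ordinal.{0}), ∀ (η x : Omega1),
    x.toOrdinal = η.toOrdinal + Ordinal.omega0 ^ ρ →
    ∀ X : Set Omega1, Set.Ioc η x ⊆ X → x ∈ Dset X ρ := by
  intro ρ
  induction ρ using Ordinal.induction with
  | _ ρ IH =>
    intro η x hx X hsub
    have hηx : η < x := by
      rw [lt_iff_s4, hx]
      have := add_lt_add_left' (a := η.toOrdinal)
        (Ordinal.opow_pos ρ Ordinal.omega0_pos)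
      rwa [add_zero] at this
    rw [Dset_eq]
    refine ⟨hsub ⟨hηx, le_refl x⟩, fun o' ho' => ?_⟩
    have h0 : zero < x := lt_of_le_of_lt (zero_le η) hηx
    refine ⟨h0, ?_⟩
    intro b hb
    set η' := max b η with hη'
    have hη'x : η' < x := max_lt hb hηx
    have hyval : η'.toOrdinal + Ordinal.omega0 ^ o' < x.toOrdinal := by
      rw [hx]
      exact prin_aux (by rw [← hx]; exact lt_iff_s4.1 hη'x) ho'
    set y := Omega1.mk (η'.toOrdinal + Ordinal.omega0 ^ o')
      (lt_trans hyval x.toOrdinal_lt) with hy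
    have hyx : y < x := by rw [lt_iff_s4]; exact hyval
    have hη'y : η' < y := by
      rw [lt_iff_s4]
      have := add_lt_add_left' (a := η'.toOrdinal)
        (Ordinal.opow_pos o' Ordinal.omega0_pos)
      rwa [add_zero] at this
    have hymem : y ∈ Dset X o' := by
      refine IH o' ho' η' y rfl X ?_
      intro z hz
      refine hsub ⟨lt_of_le_of_lt (le_max_right b η) hz.1, le_of_lt (lt_of_le_of_lt hz.2 hyx)⟩
    exact ⟨y, hymem, lt_of_le_of_lt (le_max_left b η) hη'y, hyx⟩

end Omega1
open Omega1 in
/-- If `A` is a weakly precompact set of homeomorphisms of `ω₁` (all orbits are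
countable), then the set of common fixed points of `A` is closed and unbounded. -/
theorem commonFixedPoints_closed_unbounded (A : Set (Omega1 ≃ₜ Omega1))
    (hA : ∀ x : Omega1, {y : Omega1 | ∃ g ∈ A, g x = y}.Countable) :
    IsClosed (⋂ g ∈ A, {x : Omega1 | g x = x}) ∧
      ∀ α : Omega1, ∃ β ∈ ⋂ g ∈ A, {x : Omega1 | g x = x}, α ≤ β := by
  constructor
  · refine isClosed_biInter fun g hg => ?_
    have : {x : Omega1 | g x = x} = {x : Omega1 | g x ≤ x} ∩ {x : Omega1 | x ≤ g x} := by
      ext x; simp [le_antisymm_iff, and_comm]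
    rw [this]
    exact (isClosed_le g.continuous continuous_id).inter
      (isClosed_le continuous_id g.continuous)
  intro α
  by_contra hcon
  push_neg at hcon
  -- orbit bound function
  have hFex : ∀ x : Omega1, ∃ b, ∀ g ∈ A, g x ≤ b := by
    intro x
    obtain ⟨b, hb⟩ := exists_ub (hA x)
    exact ⟨b, fun g hg => hb _ ⟨g, hg, rfl⟩⟩
  choose F hF using hFex
  -- the club D of limit closure points of F
  set D : Set Omega1 := {β | Omega1.zero < β ∧ AccB β Set.univ ∧ ∀ x < β, F x < β} with hD
  have hDclosed : ClosedS D := by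
    intro x hx hAcc
    refine ⟨hx, hAcc.mono (Set.subset_univ D), fun w hw => ?_⟩
    obtain ⟨y, hyD, hwy, hyx⟩ := hAcc w hw
    exact lt_trans (hyD.2.2 w hwy) hyx
  have hDunbdd : Unbdd D := by
    intro α₂
    have hT : ∀ x : Omega1, ∃ t, x < t ∧ ∀ w ≤ x, F w < t := by
      intro x
      obtain ⟨b, hb⟩ := exists_ub ((countable_Iic_s4 x).image F)
      refine ⟨osucc (max b x), lt_of_le_of_lt (le_max_right b x) (lt_osucc _), fun w hw => ?_⟩
      exact lt_of_le_of_lt (le_trans (hb _ (Set.mem_image_of_mem F hw)) (le_max_left b x))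
        (lt_osucc _)
    choose T hT1 hT2 using hT
    set s : ℕ → Omega1 := fun n => T^[n] (osucc α₂) with hs
    have hstep : ∀ n, s (n + 1) = T (s n) := fun n => Function.iterate_succ_apply' T n _
    have hmono : StrictMono s := strictMono_nat_of_lt_succ (fun n => (hstep n) ▸ hT1 (s n))
    set β := supSeq s with hβ
    have hsltβ : ∀ n, s n < β := lt_supSeq (fun n => hmono (Nat.lt_succ_self n))
    have hαβ : α₂ < β := lt_trans (lt_osucc α₂) (hsltβ 0)
    refine ⟨β, ⟨lt_of_le_of_lt (zero_le α₂) hαβ, ?_, ?_⟩, hαβ⟩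
    · intro b hb
      obtain ⟨n, hn⟩ := exists_lt_of_lt_supSeq hb
      exact ⟨s n, Set.mem_univ _, hn, hsltβ n⟩
    · intro w hw
      obtain ⟨n, hn⟩ := exists_lt_of_lt_supSeq hw
      calc F w < T (s n) := hT2 (s n) w hn.le
      _ = s (n + 1) := (hstep n).symm
      _ < β := hsltβ (n + 1)
  -- on D, every g ∈ A satisfies g β ≤ β
  have hDle : ∀ β ∈ D, ∀ g ∈ A, g β ≤ β := by
    intro β hβ g hg
    by_contra hgt
    push_neg at hgt
    have hU : (⇑g) ⁻¹' (Set.Ioi β) ∈ nhds β :=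
      (isOpen_Ioi.preimage g.continuous).mem_nhds hgt
    obtain ⟨l, hl, hsub⟩ := exists_Ioc_subset hβ.1 hU
    obtain ⟨y, _, hly, hyβ⟩ := hβ.2.1 l hl
    have h1 : β < g y := hsub ⟨hly, hyβ.le⟩
    have h2 : g y ≤ F y := hF y g hg
    exact absurd (lt_trans h1 (lt_of_le_of_lt h2 (hβ.2.2 y hyβ))) (lt_irrefl β)
  -- the stationary set S₀ and the choice of moving homeomorphisms
  set S₀ : Set Omega1 := {β | β ∈ D ∧ α ≤ β} with hS₀
  have hS₀stat : Stat S₀ := by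
    intro C hC
    obtain ⟨β, hβ, hαβ⟩ := club_inter_unbdd ⟨hDclosed, hDunbdd⟩ hC α
    exact ⟨β, ⟨hβ.1, hαβ.le⟩, hβ.2⟩
  have hsel : ∀ β : Omega1, ∃ g : Omega1 ≃ₜ Omega1, β ∈ S₀ → (g ∈ A ∧ g β < β) := by
    intro β
    by_cases hβ : β ∈ S₀
    · have : ∃ g ∈ A, g β ≠ β := by
        by_contra hall
        push_neg at hall
        have : β ∈ ⋂ g ∈ A, {x : Omega1 | g x = x} := by
          simp only [Set.mem_iInter, Set.mem_setOf_eq]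
          exact fun g hg => hall g hg
        exact absurd (hcon β this) (not_lt.2 hβ.2)
      obtain ⟨g, hg, hne⟩ := this
      exact ⟨g, fun _ => ⟨hg, lt_of_le_of_ne (hDle β hβ.1 g hg) hne⟩⟩
    · exact ⟨Homeomorph.refl Omega1, fun h => absurd h hβ⟩
  choose gs hgs using hsel
  -- Fodor #1 : constant value c
  obtain ⟨c, hS₁stat⟩ := fodor hS₀stat (f := fun β => gs β β)
    (fun β hβ => (hgs β hβ).2)
  set S₁ : Set Omega1 := {β | β ∈ S₀ ∧ gs β β = c} with hS₁
  -- Fodor #2 : constant left endpoint η₀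
  have hsel2 : ∀ β : Omega1, ∃ η, β ∈ S₁ → (η < β ∧ ∀ y ∈ Set.Ioc η β, gs β y ≤ c) := by
    intro β
    by_cases hβ : β ∈ S₁
    · have hU : (⇑(gs β)) ⁻¹' (Set.Iic c) ∈ nhds β := by
        refine ((isOpen_Iic c).preimage (gs β).continuous).mem_nhds ?_
        simp only [Set.mem_preimage, Set.mem_Iic]
        rw [hβ.2]
      obtain ⟨l, hl, hsub⟩ := exists_Ioc_subset hβ.1.1.1 hU
      exact ⟨l, fun _ => ⟨hl, fun y hy => hsub hy⟩⟩
    · exact ⟨zero, fun h => absurd h hβ⟩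
  choose η hη using hsel2
  obtain ⟨η₀, hS₂stat⟩ := fodor hS₁stat (f := fun β => η β)
    (fun β hβ => ((hη β) hβ).1)
  set S₂ : Set Omega1 := {β | β ∈ S₁ ∧ η β = η₀} with hS₂
  -- the witness point of high Cantor–Bendixson rank
  set ρ : Ordinal.{0} := c.toOrdinal + 1 with hρ
  have hρ1 : ρ < Ordinal.omega 1 := (osucc c).toOrdinal_lt
  have hxval : η₀.toOrdinal + Ordinal.omega0 ^ ρ < Ordinal.omega 1 := by
    rw [← Cardinal.ord_aleph, Cardinal.lt_ord, Ordinal.card_add]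
    calc η₀.toOrdinal.card + (Ordinal.omega0 ^ ρ).card
        ≤ Cardinal.aleph0 + Cardinal.aleph0 :=
          add_le_add (card_le_of_lt η₀.toOrdinal_lt)
            (card_le_of_lt (omega0_opow_lt_omega1 ρ hρ1))
    _ = Cardinal.aleph0 := Cardinal.aleph0_add_aleph0
    _ < Cardinal.aleph 1 := Cardinal.aleph0_lt_aleph_one
  set xstar : Omega1 := Omega1.mk _ hxval with hxstar
  obtain ⟨β, hβS₂, hxβ⟩ := (hS₂stat.unbdd) xstar
  set e : Omega1 → Omega1 := ⇑(gs β) with he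
  have himg : e '' (Set.Ioc η₀ β) ⊆ Set.Iic c := by
    rintro z ⟨w, hw, rfl⟩
    have := (hη β hβS₂.1).2 w (by rw [hβS₂.2]; exact hw)
    exact this
  have hη₀x : η₀ < xstar := by
    rw [lt_iff_s4]
    have := add_lt_add_left' (a := η₀.toOrdinal) (Ordinal.opow_pos ρ Ordinal.omega0_pos)
    rwa [add_zero] at this
  have hD1 : xstar ∈ Dset (Set.Ioc η₀ β) ρ := by
    refine Dset_opow ρ η₀ xstar rfl _ ?_
    intro z hz
    exact ⟨hz.1, le_trans hz.2 hxβ.le⟩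
  have hD2 : e xstar ∈ Dset (e '' Set.Ioc η₀ β) ρ :=
    Dset_map (gs β).continuous (gs β).injective hD1
  have hD3 : e xstar ∈ Dset (Set.Iic c) ρ := Dset_mono himg ρ hD2
  have hle : ρ ≤ (e xstar).toOrdinal := Dset_le hD3
  have hub : e xstar ≤ c := Dset_subset _ _ hD3
  have : ρ ≤ c.toOrdinal := le_trans hle (le_iff_s4.1 hub)
  rw [hρ] at this
  exact absurd this (by simp)
end
end

section
/- Every subset A of Homeo(ω₁) that is invariant under conjugation and contains the pointwise stabilizer of some countable family of points of ω₁ is dense in Homeo(ω₁) for the topology of pointwise convergence. -/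
noncomputable section
open Ordinal Set Topology

namespace Aux
open Cardinal

theorem lt_o1 {o : Ordinal.{0}} : o < ω_ 1 ↔ o.card < ℵ₁ := by
  rw [← ord_aleph, Cardinal.lt_ord]

theorem add_lt_o1 {a b : Ordinal.{0}} (ha : a < ω_ 1) (hb : b < ω_ 1) : a + b < ω_ 1 := by
  rw [lt_o1] at *
  rw [Ordinal.card_add]
  exact Cardinal.add_lt_of_lt aleph0_lt_aleph_one.le ha hb

theorem succ_lt_o1 {a : Ordinal.{0}} (ha : a < ω_ 1) : a + 1 < ω_ 1 :=
  (isSuccLimit_omega 1).add_one_lt ha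

-- order facts on Omega1
theorem le_iff {x y : Omega1} : x ≤ y ↔ x.toOrdinal ≤ y.toOrdinal := Iff.rfl
theorem lt_iff {x y : Omega1} : x < y ↔ x.toOrdinal < y.toOrdinal := Iff.rfl
theorem ext_iff {x y : Omega1} : x = y ↔ x.toOrdinal = y.toOrdinal := Subtype.ext_iff

theorem countable_Iic (b : Omega1) : (Set.Iic b).Countable := by
  have h1 : (Set.Iio (b.toOrdinal + 1)).Countable := by
    rw [countable_iff_lt_aleph_one, Cardinal.mk_Iio_ordinal]
    exact Cardinal.lift_lt_aleph_one.mpr (lt_o1.mp (succ_lt_o1 b.toOrdinal_lt))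
  have : Set.Iic b ⊆ (fun x : Omega1 => x.toOrdinal) ⁻¹' Set.Iio (b.toOrdinal + 1) := by
    intro x hx
    exact lt_of_le_of_lt (le_iff.mp hx) (lt_add_one _)
  exact (h1.preimage (fun x y h => Subtype.ext h)).mono this

theorem sup_lt (f : ℕ → Ordinal.{0}) (h : ∀ n, f n < ω_ 1) : (⨆ n, f n) < ω_ 1 := by
  rw [← ord_aleph]
  apply Cardinal.iSup_lt_ord_of_isRegular isRegular_aleph_one
  · simpa using aleph0_lt_aleph_one
  · intro n; rw [ord_aleph]; exact h n

theorem bddAbove (s : Set Omega1) (hs : s.Countable) : ∃ b : Omega1, ∀ x ∈ s, x ≤ b := by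
  rcases Set.eq_empty_or_nonempty s with rfl | hne
  · exact ⟨Omega1.mk 0 (omega_pos 1), by simp⟩
  obtain ⟨f, rfl⟩ := hs.exists_eq_range hne
  set g : ℕ → Ordinal.{0} := fun n => (f n).toOrdinal with hg
  refine ⟨Omega1.mk (⨆ n, g n) (sup_lt g fun n => (f n).toOrdinal_lt), ?_⟩
  rintro x ⟨n, rfl⟩
  exact Ordinal.le_iSup g n

end Aux

namespace Aux
open Cardinal

/-- Continuity criterion via rays. -/
theorem cont_rays {α : Type*} [TopologicalSpace α] (f : α → Omega1)
    (h : ∀ b : Omega1, IsOpen (f ⁻¹' Set.Ioi b) ∧ IsOpen (f ⁻¹' Set.Iio b)) : Continuous f := by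
  rw [OrderTopology.topology_eq_generate_intervals (α := Omega1)]
  apply continuous_generateFrom_iff.mpr
  rintro s ⟨a, rfl | rfl⟩
  exacts [(h a).1, (h a).2]

theorem isClopen_Iic (b : Omega1) : IsClopen (Set.Iic b) := by
  refine ⟨isClosed_Iic, ?_⟩
  have : Set.Iic b = Set.Iio (Omega1.mk (b.toOrdinal + 1) (succ_lt_o1 b.toOrdinal_lt)) := by
    ext x
    simp only [Set.mem_Iic, Set.mem_Iio, lt_iff, le_iff]
    exact (Order.lt_add_one_iff).symm
  rw [this]; exact isOpen_Iio

/-- left translation by μ -/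
def addL {μ : Ordinal.{0}} (hμ : μ < ω_ 1) (x : Omega1) : Omega1 :=
  Omega1.mk (μ + x.toOrdinal) (add_lt_o1 hμ x.toOrdinal_lt)

/-- truncated left subtraction of μ -/
def subL (μ : Ordinal.{0}) (x : Omega1) : Omega1 :=
  Omega1.mk (x.toOrdinal - μ) (lt_of_le_of_lt (Ordinal.sub_le_self _ _) x.toOrdinal_lt)

theorem continuous_addL {μ : Ordinal.{0}} (hμ : μ < ω_ 1) : Continuous (addL hμ) := by
  apply cont_rays
  intro b
  constructor
  · rcases lt_or_ge b.toOrdinal μ with hb | hb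
    · have : addL hμ ⁻¹' Set.Ioi b = Set.univ := by
        ext x
        simp only [Set.mem_preimage, Set.mem_Ioi, Set.mem_univ, iff_true]
        exact lt_iff.mpr (hb.trans_le (le_self_add))
      rw [this]; exact isOpen_univ
    · have : addL hμ ⁻¹' Set.Ioi b =
          Set.Ioi (Omega1.mk (b.toOrdinal - μ) (lt_of_le_of_lt (Ordinal.sub_le_self _ _) b.toOrdinal_lt)) := by
        ext x
        simp only [Set.mem_preimage, Set.mem_Ioi]
        rw [lt_iff, lt_iff]
        show b.toOrdinal < μ + x.toOrdinal ↔ b.toOrdinal - μ < x.toOrdinal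
        constructor
        · intro h
          by_contra hc
          push_neg at hc
          exact absurd ((add_le_add_right hc μ).trans_eq
            (Ordinal.add_sub_cancel_of_le hb)) (not_le.mpr h)
        · intro h
          exact (Ordinal.le_add_sub b.toOrdinal μ).trans_lt (add_lt_add_right h μ)
      rw [this]; exact isOpen_Ioi
  · have : addL hμ ⁻¹' Set.Iio b =
        Set.Iio (Omega1.mk (b.toOrdinal - μ) (lt_of_le_of_lt (Ordinal.sub_le_self _ _) b.toOrdinal_lt)) := by
      ext x
      simp only [Set.mem_preimage, Set.mem_Iio]
      rw [lt_iff, lt_iff]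
      exact (Ordinal.lt_sub).symm
    rw [this]; exact isOpen_Iio

theorem continuous_subL {μ : Ordinal.{0}} (hμ : μ < ω_ 1) : Continuous (subL μ) := by
  apply cont_rays
  intro b
  constructor
  · have : subL μ ⁻¹' Set.Ioi b = Set.Ioi (Omega1.mk (μ + b.toOrdinal) (add_lt_o1 hμ b.toOrdinal_lt)) := by
      ext x
      simp only [Set.mem_preimage, Set.mem_Ioi]
      rw [lt_iff, lt_iff]
      exact Ordinal.lt_sub
    rw [this]; exact isOpen_Ioi
  · rcases eq_or_lt_of_le (zero_le (a := b.toOrdinal)) with hb | hb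
    · have : subL μ ⁻¹' Set.Iio b = ∅ := by
        ext x
        simp only [Set.mem_preimage, Set.mem_Iio, Set.mem_empty_iff_false, iff_false]
        rw [lt_iff]
        show ¬ x.toOrdinal - μ < b.toOrdinal
        rw [← hb]
        exact not_lt_of_ge zero_le
      rw [this]; exact isOpen_empty
    · have : subL μ ⁻¹' Set.Iio b = Set.Iio (Omega1.mk (μ + b.toOrdinal) (add_lt_o1 hμ b.toOrdinal_lt)) := by
        ext x
        simp only [Set.mem_preimage, Set.mem_Iio]
        rw [lt_iff, lt_iff]
        show x.toOrdinal - μ < b.toOrdinal ↔ x.toOrdinal < μ + b.toOrdinal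
        constructor
        · intro h
          exact (Ordinal.le_add_sub x.toOrdinal μ).trans_lt (add_lt_add_right h μ)
        · intro h
          rcases lt_or_ge x.toOrdinal μ with hx | hx
          · rw [Ordinal.sub_eq_zero_iff_le.mpr hx.le]; exact hb
          · by_contra hc
            push_neg at hc
            exact absurd ((add_le_add_right hc μ).trans_eq
              (Ordinal.add_sub_cancel_of_le hx)) (not_le.mpr h)
      rw [this]; exact isOpen_Iio

end Aux

namespace Aux

variable (l : Omega1)

/-- `μ = l + 1` -/
def mu : Ordinal.{0} := l.toOrdinal + 1

theorem mu_lt : mu l < ω_ 1 := succ_lt_o1 l.toOrdinal_lt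
theorem mu2_lt : mu l + mu l < ω_ 1 := add_lt_o1 (mu_lt l) (mu_lt l)

/-- the swap of `[0, l]` with `(l, l + μ]` -/
def swapFun (x : Omega1) : Omega1 :=
  if x.toOrdinal < mu l then addL (mu_lt l) x
  else if x.toOrdinal < mu l + mu l then subL (mu l) x
  else x

theorem swapFun_invol (x : Omega1) : swapFun l (swapFun l x) = x := by
  rcases lt_or_ge x.toOrdinal (mu l) with h1 | h1
  · have hstep : swapFun l x = addL (mu_lt l) x := by rw [swapFun, if_pos h1]
    rw [hstep]
    have ha : ¬ (addL (mu_lt l) x).toOrdinal < mu l := not_lt.mpr (le_self_add)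
    have hb : (addL (mu_lt l) x).toOrdinal < mu l + mu l := add_lt_add_right h1 _
    rw [swapFun, if_neg ha, if_pos hb]
    apply ext_iff.mpr
    exact Ordinal.add_sub_cancel _ _
  · rcases lt_or_ge x.toOrdinal (mu l + mu l) with h2 | h2
    · have hstep : swapFun l x = subL (mu l) x := by rw [swapFun, if_neg (not_lt.mpr h1), if_pos h2]
      rw [hstep]
      have hs : (subL (mu l) x).toOrdinal < mu l := by
        show x.toOrdinal - mu l < mu l
        by_contra hc
        push_neg at hc
        exact absurd ((add_le_add_right hc (mu l)).trans_eq
          (Ordinal.add_sub_cancel_of_le h1)) (not_le.mpr h2)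
      rw [swapFun, if_pos hs]
      apply ext_iff.mpr
      exact Ordinal.add_sub_cancel_of_le h1
    · have h1' : ¬ x.toOrdinal < mu l := not_lt.mpr ((le_self_add).trans h2)
      have hstep : swapFun l x = x := by rw [swapFun, if_neg h1', if_neg (not_lt.mpr h2)]
      rw [hstep, hstep]

theorem continuous_swapFun : Continuous (swapFun l) := by
  rw [continuous_iff_continuousAt]
  intro x
  rcases lt_or_ge x.toOrdinal (mu l) with h1 | h1
  · have hU : Set.Iio (Omega1.mk (mu l) (mu_lt l)) ∈ nhds x :=
      isOpen_Iio.mem_nhds (lt_iff.mpr h1)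
    refine (continuous_addL (mu_lt l)).continuousAt.congr ?_
    refine Filter.eventuallyEq_of_mem hU fun y hy => ?_
    show addL (mu_lt l) y = swapFun l y
    rw [swapFun]
    exact (if_pos (show y.toOrdinal < mu l from hy)).symm
  · rcases lt_or_ge x.toOrdinal (mu l + mu l) with h2 | h2
    · have hU : Set.Ioi l ∩ Set.Iio (Omega1.mk (mu l + mu l) (mu2_lt l)) ∈ nhds x := by
        refine (isOpen_Ioi.inter isOpen_Iio).mem_nhds ⟨?_, lt_iff.mpr h2⟩
        exact lt_iff.mpr (lt_of_lt_of_le (Order.lt_add_one_iff.mpr le_rfl) h1)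
      refine (continuous_subL (mu_lt l)).continuousAt.congr ?_
      refine Filter.eventuallyEq_of_mem hU fun y hy => ?_
      have hy1 : ¬ y.toOrdinal < mu l := not_lt.mpr (Order.add_one_le_iff.mpr (lt_iff.mp hy.1))
      show subL (mu l) y = swapFun l y
      rw [swapFun, if_neg hy1]
      exact (if_pos (show y.toOrdinal < mu l + mu l from hy.2)).symm
    · have hkey : mu l + mu l = (mu l + l.toOrdinal) + 1 := by
        rw [mu, ← add_assoc]
      have hml : mu l + l.toOrdinal < ω_ 1 := add_lt_o1 (mu_lt l) l.toOrdinal_lt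
      have hU : Set.Ioi (Omega1.mk (mu l + l.toOrdinal) hml) ∈ nhds x := by
        refine isOpen_Ioi.mem_nhds (lt_iff.mpr ?_)
        exact lt_of_lt_of_le ((Order.lt_add_one_iff.mpr le_rfl).trans_eq hkey.symm) h2
      refine continuous_id.continuousAt.congr ?_
      refine Filter.eventuallyEq_of_mem hU fun y hy => ?_
      have h2' : mu l + mu l ≤ y.toOrdinal := hkey ▸ Order.add_one_le_iff.mpr (lt_iff.mp hy)
      have h1' : ¬ y.toOrdinal < mu l := not_lt.mpr ((le_self_add).trans h2')
      show id y = swapFun l y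
      rw [swapFun, if_neg h1', if_neg (not_lt.mpr h2'), id]

/-- the swap as a homeomorphism -/
def swapHomeo : Omega1 ≃ₜ Omega1 where
  toFun := swapFun l
  invFun := swapFun l
  left_inv := swapFun_invol l
  right_inv := swapFun_invol l
  continuous_toFun := continuous_swapFun l
  continuous_invFun := continuous_swapFun l

theorem swapHomeo_gt {x : Omega1} (hx : x ≤ l) : l < swapHomeo l x := by
  have h1 : x.toOrdinal < mu l := Order.lt_add_one_iff.mpr (le_iff.mp hx)
  show l < swapFun l x
  rw [swapFun, if_pos h1]
  apply lt_iff.mpr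
  exact lt_of_lt_of_le (Order.lt_add_one_iff.mpr le_rfl) (le_self_add)

theorem swapHomeo_symm_apply (x : Omega1) : (swapHomeo l).symm x = swapFun l x := rfl

end Aux

namespace Aux

theorem closure_Iio (l : Omega1) (h0 : ∃ y, y < l)
    (hlim : ∀ x < l, ∃ y, x < y ∧ y < l) : closure (Set.Iio l) = Set.Iic l := by
  apply subset_antisymm
  · exact closure_minimal Set.Iio_subset_Iic_self isClosed_Iic
  · intro x hx
    rcases eq_or_lt_of_le (Set.mem_Iic.mp hx) with rfl | hlt
    · rw [mem_closure_iff_nhds]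
      intro U hU
      obtain ⟨a, ha, hsub⟩ := exists_Ioc_subset_of_mem_nhds hU h0
      obtain ⟨y, hay, hyl⟩ := hlim a ha
      exact ⟨y, hsub ⟨hay, hyl.le⟩, hyl⟩
    · exact subset_closure hlt

/-- an invariant level above `c` for a homeomorphism `g` -/
theorem exists_invariant (g : Omega1 ≃ₜ Omega1) (c : Omega1) :
    ∃ l : Omega1, c < l ∧ (∀ x ≤ l, g x ≤ l) ∧ (∀ x ≤ l, g.symm x ≤ l) := by
  -- step function
  have step : ∀ b : Omega1, ∃ b' : Omega1, b < b' ∧ (∀ x ≤ b, g x ≤ b') ∧ (∀ x ≤ b, g.symm x ≤ b') := by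
    intro b
    have hcnt : ((g '' Set.Iic b) ∪ (g.symm '' Set.Iic b)).Countable :=
      (((countable_Iic b).image _).union ((countable_Iic b).image _))
    obtain ⟨b0, hb0⟩ := bddAbove _ hcnt
    set b1 := max b0 b
    refine ⟨Omega1.mk (b1.toOrdinal + 1) (succ_lt_o1 b1.toOrdinal_lt), ?_, ?_, ?_⟩
    · exact lt_iff.mpr (lt_of_le_of_lt (le_iff.mp (le_max_right b0 b)) (Order.lt_add_one_iff.mpr le_rfl))
    · intro x hx
      refine le_of_lt (lt_iff.mpr (lt_of_le_of_lt ?_ (Order.lt_add_one_iff.mpr le_rfl)))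
      exact le_iff.mp ((hb0 _ (Or.inl ⟨x, hx, rfl⟩)).trans (le_max_left b0 b))
    · intro x hx
      refine le_of_lt (lt_iff.mpr (lt_of_le_of_lt ?_ (Order.lt_add_one_iff.mpr le_rfl)))
      exact le_iff.mp ((hb0 _ (Or.inr ⟨x, hx, rfl⟩)).trans (le_max_left b0 b))
  choose st hst1 hst2 hst3 using step
  set β : ℕ → Omega1 := fun n => st^[n] c with hβ
  have hβsucc : ∀ n, β (n + 1) = st (β n) := fun n => Function.iterate_succ_apply' st n c
  have hβmono : ∀ n, β n < β (n + 1) := fun n => (hβsucc n) ▸ hst1 (β n)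
  have hlt : (⨆ n, (β n).toOrdinal) < ω_ 1 := sup_lt _ fun n => (β n).toOrdinal_lt
  set l := Omega1.mk _ hlt with hl
  have hle : ∀ n, β n ≤ l := fun n => Ordinal.le_iSup (fun n => (β n).toOrdinal) n
  have hmem : ∀ x : Omega1, x < l → ∃ n, x < β n := by
    intro x hx
    obtain ⟨n, hn⟩ := Ordinal.lt_iSup_iff.mp (lt_iff.mp hx)
    exact ⟨n, lt_iff.mpr hn⟩
  -- strict invariance on Iio l
  have hio : ∀ x, x < l → g x < l := by
    intro x hx
    obtain ⟨n, hn⟩ := hmem x hx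
    have : g x ≤ β (n + 1) := (hβsucc n) ▸ hst2 (β n) x hn.le
    exact lt_of_le_of_lt this (lt_of_lt_of_le (hβmono (n + 1)) (hle (n + 2)))
  have hio' : ∀ x, x < l → g.symm x < l := by
    intro x hx
    obtain ⟨n, hn⟩ := hmem x hx
    have : g.symm x ≤ β (n + 1) := (hβsucc n) ▸ hst3 (β n) x hn.le
    exact lt_of_le_of_lt this (lt_of_lt_of_le (hβmono (n + 1)) (hle (n + 2)))
  have hcl : c < l := lt_of_lt_of_le (hβmono 0) (hle 1)
  have hlim : ∀ x < l, ∃ y, x < y ∧ y < l := by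
    intro x hx
    obtain ⟨n, hn⟩ := hmem x hx
    exact ⟨β n, hn, lt_of_lt_of_le (hβmono n) (hle (n + 1))⟩
  -- upgrade to Iic via closure
  have himg : g '' Set.Iio l = Set.Iio l := by
    apply subset_antisymm
    · rintro _ ⟨x, hx, rfl⟩; exact hio x hx
    · intro y hy
      exact ⟨g.symm y, hio' y hy, g.apply_symm_apply y⟩
  have hIic : g '' Set.Iic l = Set.Iic l := by
    rw [← closure_Iio l ⟨c, hcl⟩ hlim, g.image_closure, himg]
  have hIic' : ∀ x ≤ l, g.symm x ≤ l := by
    intro x hx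
    obtain ⟨y, hy, hyx⟩ := hIic ▸ Set.mem_Iic.mpr hx
    rwa [show g.symm x = y from by rw [← hyx, g.symm_apply_apply]]
  refine ⟨l, hcl, fun x hx => ?_, hIic'⟩
  have : g x ∈ g '' Set.Iic l := Set.mem_image_of_mem g hx
  rwa [hIic] at this

/-- glue `g` on `[0,l]` with the identity -/
def glueHomeo (g : Omega1 ≃ₜ Omega1) (l : Omega1) (h1 : ∀ x ≤ l, g x ≤ l)
    (h2 : ∀ x ≤ l, g.symm x ≤ l) : Omega1 ≃ₜ Omega1 where
  toFun x := if x ≤ l then g x else x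
  invFun x := if x ≤ l then g.symm x else x
  left_inv x := by
    by_cases hx : x ≤ l
    · simp only [if_pos hx, if_pos (h1 x hx), g.symm_apply_apply]
    · simp only [if_neg hx]
  right_inv x := by
    by_cases hx : x ≤ l
    · simp only [if_pos hx, if_pos (h2 x hx), g.apply_symm_apply]
    · simp only [if_neg hx]
  continuous_toFun := by
    apply Continuous.if
    · intro a ha
      rw [show {x : Omega1 | x ≤ l} = Set.Iic l from rfl, (isClopen_Iic l).frontier_eq] at ha
      exact absurd ha (Set.notMem_empty a)
    · exact g.continuous
    · exact continuous_id
  continuous_invFun := by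
    apply Continuous.if
    · intro a ha
      rw [show {x : Omega1 | x ≤ l} = Set.Iic l from rfl, (isClopen_Iic l).frontier_eq] at ha
      exact absurd ha (Set.notMem_empty a)
    · exact g.symm.continuous
    · exact continuous_id

theorem glueHomeo_apply (g : Omega1 ≃ₜ Omega1) (l : Omega1) (h1 h2) (x : Omega1) :
    glueHomeo g l h1 h2 x = if x ≤ l then g x else x := rfl

end Aux

namespace Aux

theorem key (A : Set (Omega1 ≃ₜ Omega1))
    (hconj : ∀ g ∈ A, ∀ h : Omega1 ≃ₜ Omega1, h * g * h⁻¹ ∈ A)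
    (D : Set Omega1) (hD : D.Countable)
    (hfix : {g : Omega1 ≃ₜ Omega1 | ∀ x ∈ D, g x = x} ⊆ A)
    (g : Omega1 ≃ₜ Omega1) (F : Finset Omega1) :
    ∃ a ∈ A, ∀ x ∈ F, a x = g x := by
  obtain ⟨c, hc⟩ := bddAbove (D ∪ ↑F) (hD.union F.countable_toSet)
  obtain ⟨l, hcl, h1, h2⟩ := exists_invariant g c
  set a := glueHomeo g l h1 h2 with ha
  set h := swapHomeo l with hh
  have hb : (h⁻¹ * a * h) ∈ A := by
    apply hfix
    intro x hx
    show h.symm (a (h x)) = x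
    have hxl : x ≤ l := (hc x (Or.inl hx)).trans hcl.le
    have hgt : l < h x := swapHomeo_gt l hxl
    have : a (h x) = h x := by
      rw [ha, glueHomeo_apply, if_neg (not_le.mpr hgt)]
    rw [this, h.symm_apply_apply]
  refine ⟨h * (h⁻¹ * a * h) * h⁻¹, hconj _ hb h, ?_⟩
  have hgrp : h * (h⁻¹ * a * h) * h⁻¹ = a := by group
  rw [hgrp]
  intro x hx
  rw [ha, glueHomeo_apply, if_pos ((hc x (Or.inr hx)).trans hcl.le)]

end Aux

/-- Every conjugation-invariant subset of `Homeo(ω₁)` containing the pointwise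
stabilizer of a countable family of points is dense. -/
theorem conjInvariant_containing_fixator_dense (A : Set (Omega1 ≃ₜ Omega1))
    (hconj : ∀ g ∈ A, ∀ h : Omega1 ≃ₜ Omega1, h * g * h⁻¹ ∈ A)
    (D : Set Omega1) (hD : D.Countable)
    (hfix : {g : Omega1 ≃ₜ Omega1 | ∀ x ∈ D, g x = x} ⊆ A) :
    Dense A := by
  rw [dense_iff_inter_open]
  rintro U hU ⟨g, hg⟩
  obtain ⟨V, hV, rfl⟩ := isOpen_induced_iff.mp hU
  obtain ⟨I, u, hu, hsub⟩ := isOpen_pi_iff.mp hV _ hg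
  obtain ⟨a, haA, haF⟩ := Aux.key A hconj D hD hfix g I
  refine ⟨a, ?_, haA⟩
  apply hsub
  intro i hi
  show (a : Omega1 → Omega1) i ∈ u i
  rw [haF i hi]
  exact (hu i hi).2
end
end

section
/- Every proper closed subgroup of Homeo(ω₁) has uncountable index. -/
noncomputable section
open Ordinal Set Topology

/-- limit ordinal, in the old sense -/
def Ordinal.IsLimit (o : Ordinal) : Prop := o ≠ 0 ∧ ∀ a < o, Order.succ a < o

lemma Ordinal.omega0_le_of_isLimit {o : Ordinal} (h : o.IsLimit) : ω ≤ o :=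
  Ordinal.omega0_le_of_isSuccLimit (Ordinal.isSuccLimit_iff.2 ⟨h.1, Order.isSuccPrelimit_of_succ_lt h.2⟩)

namespace Omega1Aux

open Omega1 Cardinal

lemma lt_omega1_iff {o : Ordinal} : o < Ordinal.omega 1 ↔ o.card ≤ ℵ₀ := by
  rw [show Ordinal.omega 1 = (Cardinal.aleph 1).ord from (Cardinal.ord_aleph 1).symm,
    Cardinal.lt_ord, ← Cardinal.succ_aleph0, Order.lt_succ_iff]

lemma add_lt_omega1 {a b : Ordinal} (ha : a < Ordinal.omega 1) (hb : b < Ordinal.omega 1) :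
    a + b < Ordinal.omega 1 := by
  rw [lt_omega1_iff] at *
  rw [Ordinal.card_add]
  exact (Cardinal.add_le_aleph0).2 ⟨ha, hb⟩

lemma mul_lt_omega1 {a b : Ordinal} (ha : a < Ordinal.omega 1) (hb : b < Ordinal.omega 1) :
    a * b < Ordinal.omega 1 := by
  rw [lt_omega1_iff] at *
  rw [Ordinal.card_mul]
  calc a.card * b.card ≤ ℵ₀ * ℵ₀ := mul_le_mul' ha hb
    _ = ℵ₀ := Cardinal.aleph0_mul_aleph0

lemma one_lt_omega1 : (1 : Ordinal) < Ordinal.omega 1 :=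
  lt_of_lt_of_le Ordinal.one_lt_omega0 (Ordinal.omega0_le_omega 1)

/-- le on `Omega1` is le of ordinals. -/
lemma le_iff {x y : Omega1} : x ≤ y ↔ x.toOrdinal ≤ y.toOrdinal := Iff.rfl

lemma lt_iff {x y : Omega1} : x < y ↔ x.toOrdinal < y.toOrdinal := Iff.rfl

lemma ext' {x y : Omega1} (h : x.toOrdinal = y.toOrdinal) : x = y := Subtype.ext h

@[simp] lemma mk_toOrdinal (o : Ordinal) (h : o < Ordinal.omega 1) :
    (Omega1.mk o h).toOrdinal = o := rfl

/-- successor inside Omega1 -/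
def osucc (x : Omega1) : Omega1 :=
  Omega1.mk (x.toOrdinal + 1) (add_lt_omega1 x.toOrdinal_lt one_lt_omega1)

lemma lt_osucc (x : Omega1) : x < osucc x := by
  rw [lt_iff]; exact lt_add_one _

@[simp] lemma osucc_toOrdinal (x : Omega1) : (osucc x).toOrdinal = x.toOrdinal + 1 := rfl

lemma le_iff_lt_osucc {x y : Omega1} : x ≤ y ↔ x < osucc y := by
  rw [le_iff, lt_iff, osucc_toOrdinal, Ordinal.add_one_eq_succ, Order.lt_succ_iff]

lemma Iic_eq_Iio (b : Omega1) : Iic b = Iio (osucc b) := by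
  ext x; simp [le_iff_lt_osucc, mem_Iic, mem_Iio]

lemma Ioi_eq_Ici (b : Omega1) : Ioi b = Ici (osucc b) := by
  ext x
  simp only [mem_Ioi, mem_Ici]
  constructor
  · intro h
    rw [le_iff, osucc_toOrdinal, Ordinal.add_one_eq_succ, Order.succ_le_iff]
    exact h
  · intro h
    exact lt_of_lt_of_le (lt_osucc b) h

lemma isOpen_Iic (b : Omega1) : IsOpen (Iic b) := by
  rw [Iic_eq_Iio]; exact isOpen_Iio

lemma isOpen_Ioc (a b : Omega1) : IsOpen (Ioc a b) := by
  rw [show Ioc a b = Ioi a ∩ Iic b from rfl]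
  exact isOpen_Ioi.inter (isOpen_Iic b)

lemma isClosed_Ioc (a b : Omega1) : IsClosed (Ioc a b) := by
  rw [show Ioc a b = Ioi a ∩ Iic b from rfl, Ioi_eq_Ici]
  exact isClosed_Ici.inter isClosed_Iic

end Omega1Aux

namespace Omega1Aux
open Omega1 Cardinal

/-! ### Countability facts -/

lemma countable_Iio_ordinal {o : Ordinal.{0}} (ho : o < Ordinal.omega 1) :
    Countable (Iio o) := by
  rw [← Cardinal.mk_le_aleph0_iff, Ordinal.mk_Iio_ordinal]
  calc Cardinal.lift.{1} o.card ≤ Cardinal.lift.{1} ℵ₀ :=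
        Cardinal.lift_le.2 (lt_omega1_iff.1 ho)
    _ = ℵ₀ := by simp

instance countable_Iic (b : Omega1) : Countable {x : Omega1 // x ≤ b} := by
  have : Countable (Iio (b.toOrdinal + 1)) :=
    countable_Iio_ordinal (add_lt_omega1 b.toOrdinal_lt one_lt_omega1)
  refine Function.Injective.countable
    (f := fun x : {x : Omega1 // x ≤ b} =>
      (⟨x.1.toOrdinal, lt_of_le_of_lt (le_iff.1 x.2) (lt_add_one _)⟩ : Iio (b.toOrdinal + 1))) ?_
  intro x y h
  exact Subtype.ext (ext' (by simpa using congrArg Subtype.val h))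

lemma not_countable_omega1 : ¬ Countable Omega1 := by
  intro h
  have h1 : #(Iio (Ordinal.omega 1 : Ordinal.{0})) ≤ ℵ₀ := @Cardinal.mk_le_aleph0 _ h
  rw [Ordinal.mk_Iio_ordinal, Ordinal.card_omega] at h1
  have h2 : Cardinal.lift.{1,0} (Cardinal.aleph 1) ≤ Cardinal.lift.{1,0} ℵ₀ := by
    simpa using h1
  exact absurd (Cardinal.lift_le.1 h2) (not_le.2 Cardinal.aleph0_lt_aleph_one)

/-- Countable families in `Omega1` are bounded. -/
lemma exists_bound {α : Type*} [Countable α] [Nonempty α] (f : α → Omega1) :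
    ∃ b : Omega1, ∀ i, f i ≤ b := by
  obtain ⟨e, he⟩ := exists_surjective_nat α
  have ho : (⨆ n, (f (e n)).toOrdinal) < Ordinal.omega 1 := by
    exact Ordinal.iSup_lt_omega_one (fun n => (f (e n)).toOrdinal_lt)
  refine ⟨Omega1.mk _ ho, fun i => ?_⟩
  obtain ⟨n, rfl⟩ := he i
  rw [le_iff, mk_toOrdinal]
  exact Ordinal.le_iSup (fun n => (f (e n)).toOrdinal) n

lemma exists_uncountable_fiber {β : Type*} [Countable β] (f : Omega1 → β) :
    ∃ b, ¬ (f ⁻¹' {b}).Countable := by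
  by_contra h
  push_neg at h
  apply not_countable_omega1
  have huniv : (Set.univ : Set Omega1).Countable := by
    have he : (Set.univ : Set Omega1) = ⋃ b : β, f ⁻¹' {b} := by
      ext x; simp
    rw [he]
    exact Set.countable_iUnion h
  rw [Set.countable_univ_iff] at huniv
  exact huniv

/-! ### Continuity toolkit -/

/-- Points that are zero or successors are isolated. -/
lemma isOpen_singleton_of_not_limit {x : Omega1}
    (hx : x.toOrdinal = 0 ∨ ∃ a, x.toOrdinal = Order.succ a) : IsOpen ({x} : Set Omega1) := by
  rcases hx with h0 | ⟨a, ha⟩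
  · have : ({x} : Set Omega1) = Iio (osucc x) := by
      ext y
      simp only [mem_singleton_iff, mem_Iio, ← le_iff_lt_osucc]
      constructor
      · rintro rfl; exact le_refl _
      · intro hy
        refine ext' (le_antisymm ?_ ?_)
        · exact le_iff.1 hy
        · rw [h0]; exact zero_le
    rw [this]; exact isOpen_Iio
  · have halt : a < Ordinal.omega 1 := by
      refine lt_trans ?_ x.toOrdinal_lt
      rw [ha]; exact Order.lt_succ_of_le (le_refl a)
    have : ({x} : Set Omega1) = Ioc (Omega1.mk a halt) x := by
      ext y
      simp only [mem_singleton_iff, mem_Ioc]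
      constructor
      · rintro rfl
        exact ⟨by rw [lt_iff, mk_toOrdinal, ha]; exact Order.lt_succ_of_le (le_refl a),
          le_refl _⟩
      · rintro ⟨h1, h2⟩
        refine ext' (le_antisymm (le_iff.1 h2) ?_)
        rw [ha, Order.succ_le_iff]
        exact lt_iff.1 h1
    rw [this]; exact isOpen_Ioc _ _
 
lemma continuousAt_of_not_limit (f : Omega1 → Omega1) {x : Omega1}
    (hx : x.toOrdinal = 0 ∨ ∃ a, x.toOrdinal = Order.succ a) : ContinuousAt f x := by
  have hmem : ({x} : Set Omega1) ∈ nhds x :=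
    (isOpen_singleton_of_not_limit hx).mem_nhds rfl
  have : f =ᶠ[nhds x] (fun _ => f x) := by
    filter_upwards [hmem] with y hy
    rw [mem_singleton_iff] at hy; rw [hy]
  exact this.continuousAt

/-- A monotone function which is "continuous at limits from below" is continuous. -/
lemma continuous_of_mono (f : Omega1 → Omega1) (hmono : Monotone f)
    (hsup : ∀ x : Omega1, x.toOrdinal.IsLimit → ∀ u, u < f x → ∃ a, a < x ∧ u < f a) :
    Continuous f := by
  rw [continuous_iff_continuousAt]
  intro x
  rcases Ordinal.zero_or_succ_or_isSuccLimit x.toOrdinal with h0 | hs | hl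
  · exact continuousAt_of_not_limit f (Or.inl h0)
  · exact continuousAt_of_not_limit f (Or.inr (let ⟨a, ha⟩ := hs; ⟨a, ha.symm⟩))
  · intro S hS
    rw [Filter.mem_map]
    by_cases hbot : ∃ u, u < f x
    · obtain ⟨l, hl', hIoc⟩ := exists_Ioc_subset_of_mem_nhds hS hbot
      obtain ⟨a, hax, hla⟩ := hsup x ⟨Ordinal.isSuccLimit_iff.1 hl |>.1, fun a ha => hl.succ_lt ha⟩ l hl'
      have hmem : Ioc a x ∈ nhds x := (isOpen_Ioc a x).mem_nhds ⟨hax, le_refl x⟩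
      filter_upwards [hmem] with y hy
      exact hIoc ⟨lt_of_lt_of_le hla (hmono (le_of_lt hy.1)), hmono hy.2⟩
    · push_neg at hbot
      have hmem : Iic x ∈ nhds x := (isOpen_Iic x).mem_nhds (le_refl x)
      filter_upwards [hmem] with y hy
      have hfy : f y = f x := le_antisymm (hmono hy) (hbot (f y))
      show f y ∈ S
      rw [hfy]
      exact mem_of_mem_nhds hS

/-- locally-equal-to-continuous functions are continuous -/
lemma continuous_of_locally (f : Omega1 → Omega1)
    (h : ∀ x, ∃ U : Set Omega1, IsOpen U ∧ x ∈ U ∧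
      ∃ g : Omega1 → Omega1, Continuous g ∧ EqOn f g U) :
    Continuous f := by
  rw [continuous_iff_continuousAt]
  intro x
  obtain ⟨U, hU, hxU, gg, hgg, heq⟩ := h x
  have : f =ᶠ[nhds x] gg := by
    filter_upwards [hU.mem_nhds hxU] with y hy
    exact heq hy
  exact (continuousAt_congr this).2 hgg.continuousAt

/-- addition on the left as a map of Omega1 -/
def addO (c : Omega1) (x : Omega1) : Omega1 :=
  Omega1.mk (c.toOrdinal + x.toOrdinal) (add_lt_omega1 c.toOrdinal_lt x.toOrdinal_lt)

@[simp] lemma addO_toOrdinal (c x : Omega1) :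
    (addO c x).toOrdinal = c.toOrdinal + x.toOrdinal := rfl

/-- truncated subtraction as a map of Omega1 -/
def subO (c : Omega1) (x : Omega1) : Omega1 :=
  Omega1.mk (x.toOrdinal - c.toOrdinal)
    (lt_of_le_of_lt (Ordinal.sub_le_self _ _) x.toOrdinal_lt)

@[simp] lemma subO_toOrdinal (c x : Omega1) :
    (subO c x).toOrdinal = x.toOrdinal - c.toOrdinal := rfl

lemma continuous_addO (c : Omega1) : Continuous (addO c) := by
  refine continuous_of_mono _ (fun x y hxy => ?_) (fun x hx u hu => ?_)
  · rw [le_iff, addO_toOrdinal, addO_toOrdinal]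
    exact add_le_add_right (le_iff.1 hxy) _
  · rw [lt_iff, addO_toOrdinal] at hu
    by_cases hc : u.toOrdinal < c.toOrdinal
    · have hx0 : (0 : Ordinal) < x.toOrdinal := pos_iff_ne_zero.2 hx.1
      refine ⟨Omega1.mk 0 (lt_of_le_of_lt zero_le x.toOrdinal_lt), ?_, ?_⟩
      · rw [lt_iff, mk_toOrdinal]; exact hx0
      · rw [lt_iff, addO_toOrdinal, mk_toOrdinal, add_zero]; exact hc
    · push_neg at hc
      have hsub : u.toOrdinal - c.toOrdinal < x.toOrdinal := by
        rw [Ordinal.sub_lt_of_le hc]; exact hu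
      have hsucc : u.toOrdinal - c.toOrdinal + 1 < x.toOrdinal := by
        rw [Ordinal.add_one_eq_succ]; exact hx.2 _ hsub
      refine ⟨Omega1.mk _ (lt_trans hsucc x.toOrdinal_lt), ?_, ?_⟩
      · rw [lt_iff, mk_toOrdinal]; exact hsucc
      · rw [lt_iff, addO_toOrdinal, mk_toOrdinal, ← add_assoc,
          Ordinal.add_sub_cancel_of_le hc]
        exact lt_add_one _
 
lemma continuous_subO (c : Omega1) : Continuous (subO c) := by
  refine continuous_of_mono _ (fun x y hxy => ?_) (fun x hx u hu => ?_)
  · rw [le_iff, subO_toOrdinal, subO_toOrdinal]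
    exact Ordinal.sub_le.2 ((le_iff.1 hxy).trans (Ordinal.le_add_sub _ _))
  · rw [lt_iff, subO_toOrdinal, Ordinal.lt_sub] at hu
    have h1 : c.toOrdinal + u.toOrdinal + 1 < x.toOrdinal := by
      rw [Ordinal.add_one_eq_succ]; exact hx.2 _ hu
    refine ⟨Omega1.mk _ (lt_trans h1 x.toOrdinal_lt), ?_, ?_⟩
    · rw [lt_iff, mk_toOrdinal]; exact h1
    · rw [lt_iff, subO_toOrdinal, mk_toOrdinal, add_assoc, Ordinal.add_sub_cancel]
      exact lt_add_one _

/-! ### Invariant limit points for a homeomorphism -/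

lemma exists_invariant (g : Omega1 ≃ₜ Omega1) (β : Omega1) :
    ∃ δ : Omega1, β < δ ∧ δ.toOrdinal.IsLimit ∧
      (∀ x, x ≤ δ → g x ≤ δ) ∧ (∀ x, x ≤ δ → g.symm x ≤ δ) := by
  -- a one-step bound
  have step : ∀ b : Omega1, ∃ b' : Omega1, b < b' ∧
      ∀ x, x ≤ b → g x ≤ b' ∧ g.symm x ≤ b' := by
    intro b
    have : Nonempty {x : Omega1 // x ≤ b} := ⟨⟨b, le_refl b⟩⟩
    obtain ⟨b₀, hb₀⟩ := exists_bound (fun x : {x : Omega1 // x ≤ b} => max (g x.1) (g.symm x.1))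
    refine ⟨osucc (max b₀ b), lt_of_le_of_lt (le_max_right b₀ b) (lt_osucc _), ?_⟩
    intro x hx
    have h1 := hb₀ ⟨x, hx⟩
    constructor
    · exact le_trans (le_trans (le_max_left _ _) h1)
        (le_trans (le_max_left b₀ b) (le_of_lt (lt_osucc _)))
    · exact le_trans (le_trans (le_max_right _ _) h1)
        (le_trans (le_max_left b₀ b) (le_of_lt (lt_osucc _)))
  choose st hst1 hst2 using step
  set d : ℕ → Omega1 := fun n => Nat.rec (osucc β) (fun _ dn => st dn) n with hd
  have hdsucc : ∀ n, d (n + 1) = st (d n) := fun n => rfl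
  have hdlt : ∀ n, d n < d (n + 1) := fun n => hst1 (d n)
  have hδlt : (⨆ n, (d n).toOrdinal) < Ordinal.omega 1 := by
    exact Ordinal.iSup_lt_omega_one (fun n => (d n).toOrdinal_lt)
  set δ : Omega1 := Omega1.mk _ hδlt with hδdef
  have hdδ : ∀ n, d n ≤ δ := by
    intro n
    rw [le_iff, hδdef, mk_toOrdinal]
    exact Ordinal.le_iSup (fun n => (d n).toOrdinal) n
  have hlt_mem : ∀ x : Omega1, x < δ → ∃ n, x ≤ d n := by
    intro x hx
    rw [lt_iff, hδdef, mk_toOrdinal, Ordinal.lt_iSup_iff] at hx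
    obtain ⟨n, hn⟩ := hx
    exact ⟨n, le_of_lt hn⟩
  have hd0δ : d 0 < δ := lt_of_lt_of_le (hdlt 0) (hdδ 1)
  have hlim : δ.toOrdinal.IsLimit := by
    constructor
    · intro h0
      have := lt_iff.1 hd0δ
      rw [h0] at this
      exact absurd this (not_lt_zero (a := (d 0).toOrdinal))
    · intro a ha
      rw [hδdef, mk_toOrdinal, Ordinal.lt_iSup_iff] at ha ⊢
      obtain ⟨n, hn⟩ := ha
      refine ⟨n + 1, lt_of_le_of_lt ?_ (lt_iff.1 (hdlt n))⟩
      rw [Order.succ_le_iff]; exact hn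
  have key : ∀ h : Omega1 ≃ₜ Omega1,
      (∀ n x, x ≤ d n → h x ≤ d (n+1)) → (∀ n x, x ≤ d n → h.symm x ≤ d (n+1)) →
      (∀ x, x ≤ δ → h x ≤ δ) := by
    intro h hh hh' x hx
    rcases eq_or_lt_of_le hx with rfl | hlt
    · have hge : δ ≤ h δ := by
        by_contra hc
        push_neg at hc
        obtain ⟨n, hn⟩ := hlt_mem _ hc
        have h2 : h.symm (h δ) ≤ d (n+1) := hh' n _ hn
        rw [Homeomorph.symm_apply_apply] at h2
        exact absurd (lt_of_le_of_lt h2 (lt_of_lt_of_le (hdlt (n+1)) (hdδ (n+2))))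
          (lt_irrefl δ)
      by_contra hc
      push_neg at hc
      have hc' : δ < h δ := lt_of_le_of_ne hge (by intro he; rw [← he] at hc; exact lt_irrefl _ hc)
      have hU : (fun z => h z) ⁻¹' (Ioi δ) ∈ nhds δ :=
        (h.continuous.continuousAt).preimage_mem_nhds (isOpen_Ioi.mem_nhds hc')
      obtain ⟨l, hlδ, hsub⟩ := exists_Ioc_subset_of_mem_nhds hU ⟨d 0, hd0δ⟩
      have hyδ : osucc l < δ := by
        rw [lt_iff, osucc_toOrdinal, Ordinal.add_one_eq_succ]
        exact hlim.2 _ (lt_iff.1 hlδ)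
      have hy : δ < h (osucc l) := hsub ⟨lt_osucc l, le_of_lt hyδ⟩
      obtain ⟨n, hn⟩ := hlt_mem _ hyδ
      have h3 : h (osucc l) ≤ δ := (hh n _ hn).trans (hdδ (n+1))
      exact absurd hy (not_lt.2 h3)
    · obtain ⟨n, hn⟩ := hlt_mem x hlt
      exact (hh n _ hn).trans (hdδ (n+1))
  refine ⟨δ, lt_of_lt_of_le (lt_osucc β) ((le_of_lt (hdlt 0)).trans (hdδ 1)), hlim, ?_, ?_⟩
  · refine key g (fun n x hx => ?_) (fun n x hx => ?_)
    · rw [hdsucc]; exact (hst2 (d n) x hx).1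
    · rw [hdsucc]; exact (hst2 (d n) x hx).2
  · refine key g.symm (fun n x hx => ?_) (fun n x hx => ?_)
    · rw [hdsucc]; exact (hst2 (d n) x hx).2
    · rw [hdsucc, Homeomorph.symm_symm]; exact (hst2 (d n) x hx).1

/-! ### The truncation homeomorphism -/

/-- `g` truncated to `Iic δ`, identity elsewhere. -/
def pfun (g : Omega1 ≃ₜ Omega1) (δ : Omega1) : Omega1 → Omega1 :=
  fun x => if x ≤ δ then g x else x

lemma pfun_cont (g : Omega1 ≃ₜ Omega1) (δ : Omega1) : Continuous (pfun g δ) := by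
  refine continuous_of_locally _ (fun x => ?_)
  by_cases hx : x ≤ δ
  · refine ⟨Iic δ, isOpen_Iic δ, hx, g, g.continuous, fun y hy => ?_⟩
    simp only [pfun, if_pos (mem_Iic.1 hy)]
  · refine ⟨(Iic δ)ᶜ, isClosed_Iic.isOpen_compl, hx, id, continuous_id, fun y hy => ?_⟩
    have hyn : ¬ y ≤ δ := fun h => hy (mem_Iic.2 h)
    simp only [pfun, if_neg hyn, id]

lemma pfun_le {g : Omega1 ≃ₜ Omega1} {δ : Omega1} (hg : ∀ x, x ≤ δ → g x ≤ δ) :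
    ∀ x, x ≤ δ → pfun g δ x ≤ δ := by
  intro x hx; simp only [pfun, if_pos hx]; exact hg x hx

lemma pfun_eq {g : Omega1 ≃ₜ Omega1} {δ : Omega1} {x : Omega1} (hx : x ≤ δ) :
    pfun g δ x = g x := if_pos hx

lemma pfun_inv {g : Omega1 ≃ₜ Omega1} {δ : Omega1}
    (hg : ∀ x, x ≤ δ → g x ≤ δ) :
    ∀ x, pfun g.symm δ (pfun g δ x) = x := by
  intro x
  by_cases hx : x ≤ δ
  · rw [pfun_eq hx, pfun_eq (hg x hx), Homeomorph.symm_apply_apply]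
  · simp only [pfun, if_neg hx]

/-- the truncation as a homeomorphism -/
def pH (g : Omega1 ≃ₜ Omega1) (δ : Omega1)
    (hg : ∀ x, x ≤ δ → g x ≤ δ) (hg' : ∀ x, x ≤ δ → g.symm x ≤ δ) : Omega1 ≃ₜ Omega1 where
  toEquiv := ⟨pfun g δ, pfun g.symm δ, pfun_inv hg, by
    have := pfun_inv (g := g.symm) (δ := δ) hg'
    rwa [Homeomorph.symm_symm] at this⟩
  continuous_toFun := pfun_cont g δ
  continuous_invFun := pfun_cont g.symm δ

@[simp] lemma pH_apply (g : Omega1 ≃ₜ Omega1) (δ : Omega1) (hg) (hg') (x : Omega1) :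
    pH g δ hg hg' x = pfun g δ x := rfl

/-! ### Blocks -/

def baseO (δ ξ : Omega1) : Omega1 :=
  Omega1.mk (δ.toOrdinal * (1 + ξ.toOrdinal))
    (mul_lt_omega1 δ.toOrdinal_lt (add_lt_omega1 one_lt_omega1 ξ.toOrdinal_lt))

def cO (δ ξ : Omega1) : Omega1 := osucc (baseO δ ξ)

def topO (δ ξ : Omega1) : Omega1 :=
  Omega1.mk ((baseO δ ξ).toOrdinal + δ.toOrdinal)
    (add_lt_omega1 (baseO δ ξ).toOrdinal_lt δ.toOrdinal_lt)

/-- The block indexed by ξ : an interval of length δ far above δ. -/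
def Blk (δ ξ : Omega1) : Set Omega1 := Ioc (baseO δ ξ) (topO δ ξ)

lemma mem_Blk {δ ξ x : Omega1} : x ∈ Blk δ ξ ↔ baseO δ ξ < x ∧ x ≤ topO δ ξ := mem_Ioc

section DeltaLimit

variable {δ : Omega1}

lemma one_add_le_delta (hδ : δ.toOrdinal.IsLimit) {x : Omega1} (hx : x ≤ δ) : 1 + x.toOrdinal ≤ δ.toOrdinal := by
  rcases eq_or_lt_of_le (le_iff.1 hx) with he | hlt
  · rw [he, Ordinal.one_add_of_omega0_le (Ordinal.omega0_le_of_isLimit hδ)]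
  · calc 1 + x.toOrdinal
        ≤ 1 + δ.toOrdinal := add_le_add_right (le_of_lt hlt) 1
      _ = δ.toOrdinal := Ordinal.one_add_of_omega0_le (Ordinal.omega0_le_of_isLimit hδ)

lemma delta_le_base (ξ : Omega1) : δ ≤ baseO δ ξ := by
  rw [le_iff]
  calc δ.toOrdinal = δ.toOrdinal * 1 := (mul_one _).symm
    _ ≤ δ.toOrdinal * (1 + ξ.toOrdinal) := mul_le_mul_right le_self_add _
    _ = (baseO δ ξ).toOrdinal := rfl

lemma addO_mem_Blk (hδ : δ.toOrdinal.IsLimit) {ξ x : Omega1} (hx : x ≤ δ) : addO (cO δ ξ) x ∈ Blk δ ξ := by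
  rw [mem_Blk]
  constructor
  · rw [lt_iff, addO_toOrdinal]
    calc (baseO δ ξ).toOrdinal < (baseO δ ξ).toOrdinal + 1 := lt_add_one _
      _ = (cO δ ξ).toOrdinal := rfl
      _ ≤ (cO δ ξ).toOrdinal + x.toOrdinal := le_self_add
  · rw [le_iff, addO_toOrdinal]
    show (baseO δ ξ).toOrdinal + 1 + x.toOrdinal ≤ (baseO δ ξ).toOrdinal + δ.toOrdinal
    rw [add_assoc]
    exact add_le_add_right (one_add_le_delta hδ hx) _

lemma Blk_not_le {ξ x : Omega1} (hx : x ∈ Blk δ ξ) : ¬ x ≤ δ := by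
  intro hc
  exact absurd (lt_of_le_of_lt (le_iff.1 (delta_le_base (δ := δ) ξ)) (lt_iff.1 (mem_Blk.1 hx).1))
    (not_lt.2 (le_iff.1 hc))

lemma cO_le_of_mem {ξ x : Omega1} (hx : x ∈ Blk δ ξ) : (cO δ ξ).toOrdinal ≤ x.toOrdinal := by
  show (baseO δ ξ).toOrdinal + 1 ≤ x.toOrdinal
  rw [Ordinal.add_one_eq_succ, Order.succ_le_iff]
  exact lt_iff.1 (mem_Blk.1 hx).1

lemma subO_le_of_mem (hδ : δ.toOrdinal.IsLimit) {ξ x : Omega1} (hx : x ∈ Blk δ ξ) : subO (cO δ ξ) x ≤ δ := by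
  rw [le_iff, subO_toOrdinal, Ordinal.sub_le]
  show x.toOrdinal ≤ (baseO δ ξ).toOrdinal + 1 + δ.toOrdinal
  rw [add_assoc, Ordinal.one_add_of_omega0_le (Ordinal.omega0_le_of_isLimit hδ)]
  exact le_iff.1 (mem_Blk.1 hx).2

lemma addO_subO_of_mem {ξ x : Omega1} (hx : x ∈ Blk δ ξ) :
    addO (cO δ ξ) (subO (cO δ ξ) x) = x := by
  refine ext' ?_
  rw [addO_toOrdinal, subO_toOrdinal]
  exact Ordinal.add_sub_cancel_of_le (cO_le_of_mem hx)

lemma subO_addO (c x : Omega1) : subO c (addO c x) = x := by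
  refine ext' ?_
  rw [subO_toOrdinal, addO_toOrdinal]
  exact Ordinal.add_sub_cancel _ _

/-- distinct blocks are disjoint -/
lemma Blk_disj {ξ η x : Omega1} (hne : ξ ≠ η) (hx : x ∈ Blk δ ξ) : x ∉ Blk δ η := by
  have key : ∀ a b : Omega1, a < b → (topO δ a).toOrdinal ≤ (baseO δ b).toOrdinal := by
    intro a b hab
    show (baseO δ a).toOrdinal + δ.toOrdinal ≤ δ.toOrdinal * (1 + b.toOrdinal)
    calc (baseO δ a).toOrdinal + δ.toOrdinal
        = δ.toOrdinal * (1 + a.toOrdinal) + δ.toOrdinal := rfl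
      _ = δ.toOrdinal * Order.succ (1 + a.toOrdinal) := (Ordinal.mul_succ _ _).symm
      _ = δ.toOrdinal * ((1 + a.toOrdinal) + 1) := by rw [Ordinal.add_one_eq_succ]
      _ = δ.toOrdinal * (1 + (a.toOrdinal + 1)) := by rw [add_assoc]
      _ ≤ δ.toOrdinal * (1 + b.toOrdinal) := by
          refine mul_le_mul_right (add_le_add_right ?_ 1) _
          rw [Ordinal.add_one_eq_succ, Order.succ_le_iff]
          exact lt_iff.1 hab
  intro hc
  rcases lt_or_gt_of_ne hne with hlt | hgt
  · have h1 : x.toOrdinal ≤ (baseO δ η).toOrdinal :=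
      le_trans (le_iff.1 (mem_Blk.1 hx).2) (key ξ η hlt)
    exact absurd (lt_iff.1 (mem_Blk.1 hc).1) (not_lt.2 h1)
  · have h1 : x.toOrdinal ≤ (baseO δ ξ).toOrdinal :=
      le_trans (le_iff.1 (mem_Blk.1 hc).2) (key η ξ hgt)
    exact absurd (lt_iff.1 (mem_Blk.1 hx).1) (not_lt.2 h1)

end DeltaLimit

attribute [local instance] Classical.propDecidable

/-! ### The swap homeomorphism -/

/-- swap `Iic δ` with the block `Blk δ ξ`. -/
def sfun (δ ξ : Omega1) : Omega1 → Omega1 := fun x =>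
  if x ≤ δ then addO (cO δ ξ) x else if x ∈ Blk δ ξ then subO (cO δ ξ) x else x

lemma sfun_low {δ ξ x : Omega1} (hx : x ≤ δ) : sfun δ ξ x = addO (cO δ ξ) x := if_pos hx

lemma sfun_blk {δ ξ x : Omega1} (_hδ : δ.toOrdinal.IsLimit)
    (hx : x ∈ Blk δ ξ) : sfun δ ξ x = subO (cO δ ξ) x := by
  rw [sfun, if_neg (Blk_not_le hx), if_pos hx]

lemma sfun_out {δ ξ x : Omega1} (h1 : ¬ x ≤ δ) (h2 : x ∉ Blk δ ξ) : sfun δ ξ x = x := by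
  rw [sfun, if_neg h1, if_neg h2]

lemma sfun_invol {δ ξ : Omega1} (hδ : δ.toOrdinal.IsLimit) (x : Omega1) :
    sfun δ ξ (sfun δ ξ x) = x := by
  by_cases h1 : x ≤ δ
  · rw [sfun_low h1]
    have hm := addO_mem_Blk hδ (ξ := ξ) h1
    rw [sfun_blk hδ hm, subO_addO]
  · by_cases h2 : x ∈ Blk δ ξ
    · rw [sfun_blk hδ h2, sfun_low (subO_le_of_mem hδ h2), addO_subO_of_mem h2]
    · rw [sfun_out h1 h2, sfun_out h1 h2]

lemma sfun_cont {δ : Omega1} (hδ : δ.toOrdinal.IsLimit) (ξ : Omega1) :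
    Continuous (sfun δ ξ) := by
  refine continuous_of_locally _ (fun x => ?_)
  by_cases h1 : x ≤ δ
  · exact ⟨Iic δ, isOpen_Iic δ, h1, addO (cO δ ξ), continuous_addO _,
      fun y hy => sfun_low (mem_Iic.1 hy)⟩
  · by_cases h2 : x ∈ Blk δ ξ
    · exact ⟨Blk δ ξ, isOpen_Ioc _ _, h2, subO (cO δ ξ), continuous_subO _,
        fun y hy => sfun_blk hδ hy⟩
    · refine ⟨(Iic δ ∪ Blk δ ξ)ᶜ, ?_, ?_, id, continuous_id, fun y hy => ?_⟩
      · exact (isClosed_Iic.union (isClosed_Ioc _ _)).isOpen_compl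
      · simp only [mem_compl_iff, mem_union]
        rintro (h | h)
        · exact h1 (mem_Iic.1 h)
        · exact h2 h
      · simp only [mem_compl_iff, mem_union] at hy
        push_neg at hy
        exact sfun_out (fun h => hy.1 (mem_Iic.2 h)) hy.2

/-- the swap as a homeomorphism -/
def sH {δ : Omega1} (hδ : δ.toOrdinal.IsLimit) (ξ : Omega1) : Omega1 ≃ₜ Omega1 where
  toEquiv := ⟨sfun δ ξ, sfun δ ξ, sfun_invol hδ, sfun_invol hδ⟩
  continuous_toFun := sfun_cont hδ ξ
  continuous_invFun := sfun_cont hδ ξ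

@[simp] lemma sH_apply {δ : Omega1} (hδ : δ.toOrdinal.IsLimit) (ξ x : Omega1) :
    sH hδ ξ x = sfun δ ξ x := rfl

lemma sH_inv {δ : Omega1} (hδ : δ.toOrdinal.IsLimit) (ξ : Omega1) : (sH hδ ξ)⁻¹ = sH hδ ξ :=
  Homeomorph.ext fun _ => rfl

/-! ### The copy homeomorphism -/

/-- a copy of `u` (truncated below `δ`) acting inside the block `Blk δ ξ`. -/
def vfun (δ ξ : Omega1) (u : Omega1 → Omega1) : Omega1 → Omega1 := fun x =>
  if x ∈ Blk δ ξ then addO (cO δ ξ) (u (subO (cO δ ξ) x)) else x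

lemma vfun_blk {δ ξ x : Omega1} {u : Omega1 → Omega1} (hx : x ∈ Blk δ ξ) :
    vfun δ ξ u x = addO (cO δ ξ) (u (subO (cO δ ξ) x)) := if_pos hx

lemma vfun_out {δ ξ x : Omega1} {u : Omega1 → Omega1} (hx : x ∉ Blk δ ξ) :
    vfun δ ξ u x = x := if_neg hx

lemma vfun_inv {δ ξ : Omega1} (hδ : δ.toOrdinal.IsLimit) {u u' : Omega1 → Omega1}
    (hu : ∀ x, x ≤ δ → u x ≤ δ) (hinv : ∀ x, x ≤ δ → u' (u x) = x) (x : Omega1) :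
    vfun δ ξ u' (vfun δ ξ u x) = x := by
  by_cases hx : x ∈ Blk δ ξ
  · rw [vfun_blk hx]
    have hy : u (subO (cO δ ξ) x) ≤ δ := hu _ (subO_le_of_mem hδ hx)
    have hm : addO (cO δ ξ) (u (subO (cO δ ξ) x)) ∈ Blk δ ξ := addO_mem_Blk hδ hy
    rw [vfun_blk hm, subO_addO, hinv _ (subO_le_of_mem hδ hx), addO_subO_of_mem hx]
  · rw [vfun_out hx, vfun_out hx]

lemma vfun_cont (δ ξ : Omega1) {u : Omega1 → Omega1} (hu : Continuous u) :
    Continuous (vfun δ ξ u) := by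
  refine continuous_of_locally _ (fun x => ?_)
  by_cases hx : x ∈ Blk δ ξ
  · refine ⟨Blk δ ξ, isOpen_Ioc _ _, hx,
      (fun y => addO (cO δ ξ) (u (subO (cO δ ξ) y))), ?_, fun y hy => vfun_blk hy⟩
    exact (continuous_addO _).comp (hu.comp (continuous_subO _))
  · refine ⟨(Blk δ ξ)ᶜ, (isClosed_Ioc _ _).isOpen_compl, hx, id, continuous_id,
      fun y hy => vfun_out hy⟩

/-- the copy of the truncation of `g` in block `ξ`, as a homeomorphism -/
def vH (g : Omega1 ≃ₜ Omega1) {δ : Omega1} (hδ : δ.toOrdinal.IsLimit)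
    (hg : ∀ x, x ≤ δ → g x ≤ δ) (hg' : ∀ x, x ≤ δ → g.symm x ≤ δ)
    (ξ : Omega1) : Omega1 ≃ₜ Omega1 where
  toEquiv := ⟨vfun δ ξ (pfun g δ), vfun δ ξ (pfun g.symm δ),
    vfun_inv hδ (pfun_le hg) (fun x _ => pfun_inv hg x),
    vfun_inv hδ (pfun_le hg') (fun x _ => by
      have := pfun_inv (g := g.symm) (δ := δ) hg' x
      rwa [Homeomorph.symm_symm] at this)⟩
  continuous_toFun := vfun_cont δ ξ (pfun_cont g δ)
  continuous_invFun := vfun_cont δ ξ (pfun_cont g.symm δ)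

@[simp] lemma vH_apply (g : Omega1 ≃ₜ Omega1) {δ : Omega1} (hδ : δ.toOrdinal.IsLimit)
    (hg : ∀ x, x ≤ δ → g x ≤ δ) (hg' : ∀ x, x ≤ δ → g.symm x ≤ δ) (ξ x : Omega1) :
    vH g hδ hg hg' ξ x = vfun δ ξ (pfun g δ) x := rfl

@[simp] lemma vH_inv_apply (g : Omega1 ≃ₜ Omega1) {δ : Omega1} (hδ : δ.toOrdinal.IsLimit)
    (hg : ∀ x, x ≤ δ → g x ≤ δ) (hg' : ∀ x, x ≤ δ → g.symm x ≤ δ) (ξ x : Omega1) :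
    (vH g hδ hg hg' ξ)⁻¹ x = vfun δ ξ (pfun g.symm δ) x := rfl

/-! ### The conjugation computation -/

lemma mul_apply (a b : Omega1 ≃ₜ Omega1) (x : Omega1) : (a * b) x = a (b x) := rfl

lemma conj_eval (g : Omega1 ≃ₜ Omega1) {δ : Omega1} (hδ : δ.toOrdinal.IsLimit)
    (hg : ∀ x, x ≤ δ → g x ≤ δ) (hg' : ∀ x, x ≤ δ → g.symm x ≤ δ)
    {ξ η : Omega1} (hne : ξ ≠ η) {x : Omega1} (hx : x ≤ δ) :
    ((sH hδ η * sH hδ ξ) * ((vH g hδ hg hg' ξ)⁻¹ * vH g hδ hg hg' η) *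
      (sH hδ η * sH hδ ξ)⁻¹) x = g x := by
  have hC : (sH hδ η * sH hδ ξ)⁻¹ = sH hδ ξ * sH hδ η := by
    rw [mul_inv_rev, sH_inv, sH_inv]
  rw [hC, mul_apply, mul_apply, mul_apply, mul_apply, mul_apply]
  -- innermost : sH η x then sH ξ
  have h1 : (sH hδ η) x = addO (cO δ η) x := by rw [sH_apply, sfun_low hx]
  set y := addO (cO δ η) x with hy
  have hyB : y ∈ Blk δ η := addO_mem_Blk hδ hx
  have hyξ : y ∉ Blk δ ξ := fun h => (Blk_disj hne h) hyB
  have h2 : (sH hδ ξ) y = y := by rw [sH_apply, sfun_out (Blk_not_le hyB) hyξ]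
  rw [h1, h2]
  -- apply v η
  have h3 : (vH g hδ hg hg' η) y = addO (cO δ η) (pfun g δ x) := by
    rw [vH_apply, vfun_blk hyB, hy, subO_addO]
  rw [h3]
  set z := addO (cO δ η) (pfun g δ x) with hz
  have hzB : z ∈ Blk δ η := addO_mem_Blk hδ (pfun_le hg x hx)
  have hzξ : z ∉ Blk δ ξ := fun h => (Blk_disj hne h) hzB
  have h4 : (vH g hδ hg hg' ξ)⁻¹ z = z := by rw [vH_inv_apply, vfun_out hzξ]
  rw [h4]
  have h5 : (sH hδ ξ) z = z := by rw [sH_apply, sfun_out (Blk_not_le hzB) hzξ]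
  rw [h5]
  rw [sH_apply, sfun_blk hδ hzB, hz, subO_addO, pfun_eq hx]

/-! ### Density of countable-index subgroups -/

lemma dense_step (H : Subgroup (Omega1 ≃ₜ Omega1))
    (hc : Countable ((Omega1 ≃ₜ Omega1) ⧸ H)) (g : Omega1 ≃ₜ Omega1) (F : Finset Omega1) :
    ∃ h : Omega1 ≃ₜ Omega1, h ∈ H ∧ ∀ x ∈ F, h x = g x := by
  -- a bound for F
  obtain ⟨β, hβ⟩ : ∃ β : Omega1, ∀ x ∈ F, x ≤ β := by
    rcases F.eq_empty_or_nonempty with rfl | hFne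
    · exact ⟨Omega1.mk 0 (lt_of_lt_of_le Ordinal.omega0_pos (Ordinal.omega0_le_omega 1)),
        by simp⟩
    · have : Nonempty {x : Omega1 // x ∈ F} := ⟨⟨hFne.choose, hFne.choose_spec⟩⟩
      obtain ⟨β, hb⟩ := exists_bound (fun x : {x : Omega1 // x ∈ F} => x.1)
      exact ⟨β, fun x hx => hb ⟨x, hx⟩⟩
  obtain ⟨δ, hβδ, hδ, hg, hg'⟩ := exists_invariant g β
  -- pigeonhole 1 : two swaps in a common coset, uncountably often
  obtain ⟨q, hq⟩ := exists_uncountable_fiber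
    (fun ξ => (QuotientGroup.mk (sH hδ ξ) : (Omega1 ≃ₜ Omega1) ⧸ H))
  set T := (fun ξ => (QuotientGroup.mk (sH hδ ξ) : (Omega1 ≃ₜ Omega1) ⧸ H)) ⁻¹' {q} with hT
  -- pigeonhole 2 : two copies in a common coset, indices from T
  have hnotinj : ¬ Function.Injective
      (fun ξ : T => (QuotientGroup.mk (vH g hδ hg hg' ξ.1) : (Omega1 ≃ₜ Omega1) ⧸ H)) := by
    intro hinj
    exact hq (Set.countable_coe_iff.1 hinj.countable)
  rw [Function.not_injective_iff] at hnotinj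
  obtain ⟨ξ', η', hψ, hne⟩ := hnotinj
  have hne1 : ξ'.1 ≠ η'.1 := fun h => hne (Subtype.ext h)
  -- the two elements of H
  have hs : (sH hδ ξ'.1)⁻¹ * sH hδ η'.1 ∈ H := by
    rw [← QuotientGroup.eq]
    have h1 : (QuotientGroup.mk (sH hδ ξ'.1) : (Omega1 ≃ₜ Omega1) ⧸ H) = q := ξ'.2
    have h2 : (QuotientGroup.mk (sH hδ η'.1) : (Omega1 ≃ₜ Omega1) ⧸ H) = q := η'.2
    rw [h1, h2]
  have hcmem : sH hδ η'.1 * sH hδ ξ'.1 ∈ H := by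
    have := H.inv_mem hs
    rwa [mul_inv_rev, inv_inv, sH_inv] at this
  have hmmem : (vH g hδ hg hg' ξ'.1)⁻¹ * vH g hδ hg hg' η'.1 ∈ H := by
    rw [← QuotientGroup.eq]
    exact hψ
  refine ⟨(sH hδ η'.1 * sH hδ ξ'.1) *
    ((vH g hδ hg hg' ξ'.1)⁻¹ * vH g hδ hg hg' η'.1) * (sH hδ η'.1 * sH hδ ξ'.1)⁻¹,
    H.mul_mem (H.mul_mem hcmem hmmem) (H.inv_mem hcmem), ?_⟩
  intro x hx
  exact conj_eval g hδ hg hg' hne1 ((hβ x hx).trans (le_of_lt hβδ))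

end Omega1Aux

/-- Every proper closed subgroup of `Homeo(ω₁)` has uncountable index. -/
theorem proper_closed_subgroup_uncountable_index (H : Subgroup (Omega1 ≃ₜ Omega1))
    (hclosed : IsClosed (H : Set (Omega1 ≃ₜ Omega1))) (hne : H ≠ ⊤) :
    ¬ Countable ((Omega1 ≃ₜ Omega1) ⧸ H) := by
  intro hcount
  apply hne
  refine (Subgroup.eq_top_iff' H).2 (fun g => ?_)
  have hmem : g ∈ closure (H : Set (Omega1 ≃ₜ Omega1)) := by
    rw [mem_closure_iff]
    intro o ho hgo
    obtain ⟨t, ht, rfl⟩ := isOpen_induced_iff.1 ho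
    obtain ⟨I, u, hu, hpi⟩ := isOpen_pi_iff.1 ht _ hgo
    obtain ⟨h, hH, hhx⟩ := Omega1Aux.dense_step H hcount g I
    refine ⟨h, ?_, hH⟩
    show (h : Omega1 → Omega1) ∈ t
    apply hpi
    intro a ha
    have : (h : Omega1 → Omega1) a = g a := hhx a ha
    rw [this]
    exact (hu a ha).2
  rwa [hclosed.closure_eq] at hmem
end
end
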